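/- arXiv:1505.02261 — 5 statements merged into one kernel-verified Lean document; each statement's English description precedes it below -/
import Mathlib

section
/- Let m>0, s₀>0, 0<r≤1 and s > s₀/r. Let (M,μ) be a measure space, ι a countable index set, and (u_ξ)_{ξ∈ι}, (v_ξ)_{ξ∈ι} biorthogonal families in L²(μ) with ‖u_ξ‖_{L²}=‖v_ξ‖_{L²}=1 for all ξ. Let λ : ι → ℝ satisfy λ_ξ ≤ 0 for all ξ, and set ⟨ξ⟩ := (1+λ_ξ²)^{1/(2m)}; assume ∑_{ξ∈ι} ⟨ξ⟩^{-s₀} < ∞. Let A : L²(μ) → L²(μ) be a bounded linear operator such that for every f ∈ L²(μ), A f = ∑_{ξ∈ι} (1-λ_ξ)^{-s/m}·(∫_M f·\overline{v_ξ} dμ)·u_ξ, with the series converging in L²(μ). Then A is r-nuclear from L²(μ) to L²(μ). (This applies in particular to A = (I-L)^{-s/m} when -L is a positive operator with eigenvalues -λ_ξ and biorthogonal eigenfunction systems u_ξ, v_ξ.) -/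
open MeasureTheory
open scoped ENNReal

noncomputable section

/-- A bounded linear operator `T : B₁ → B₂` is `r`-nuclear if there exist a sequence of
continuous linear functionals `φ k` on `B₁` and a sequence `y k` in `B₂` such that
`T x = ∑ k, φ k x • y k` (converging in `B₂`) and `∑ k, ‖φ k‖^r * ‖y k‖^r < ∞`. -/
def IsRNuclear {B₁ B₂ : Type*} [NormedAddCommGroup B₁] [NormedSpace ℂ B₁]
    [NormedAddCommGroup B₂] [NormedSpace ℂ B₂] (r : ℝ) (T : B₁ →L[ℂ] B₂) : Prop :=
  ∃ (φ : ℕ → (B₁ →L[ℂ] ℂ)) (y : ℕ → B₂),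
    (∀ x, HasSum (fun k => φ k x • y k) (T x)) ∧
    Summable (fun k => ‖φ k‖ ^ r * ‖y k‖ ^ r)

theorem statement_6
    {M : Type*} [MeasurableSpace M] {μ : Measure M}
    {ι : Type*} [Countable ι] [DecidableEq ι]
    (m s₀ r s : ℝ) (hm : 0 < m) (hs₀ : 0 < s₀) (hr0 : 0 < r) (hr1 : r ≤ 1)
    (hs : s₀ / r < s)
    (u v : ι → Lp ℂ 2 μ)
    (hbi : ∀ ξ η : ι,
      (∫ x, u ξ x * (starRingEnd ℂ) (v η x) ∂μ) = if ξ = η then 1 else 0)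
    (hu : ∀ ξ : ι, ‖u ξ‖ = 1) (hv : ∀ ξ : ι, ‖v ξ‖ = 1)
    (lam : ι → ℝ) (hlam : ∀ ξ : ι, lam ξ ≤ 0)
    (hsum : Summable fun ξ => ((1 + lam ξ ^ 2) ^ (1 / (2 * m))) ^ (-s₀))
    (A : Lp ℂ 2 μ →L[ℂ] Lp ℂ 2 μ)
    (hA : ∀ f : Lp ℂ 2 μ,
      HasSum (fun ξ =>
        ((((1 - lam ξ) ^ (-(s / m)) : ℝ) : ℂ)
          * ∫ x, f x * (starRingEnd ℂ) (v ξ x) ∂μ) • u ξ) (A f)) :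
    IsRNuclear r A := by

  letI : Encodable ι := Encodable.ofCountable ι
  set c : ι → ℂ := fun ξ => (((1 - lam ξ) ^ (-(s / m)) : ℝ) : ℂ) with hc
  set φ' : ι → (Lp ℂ 2 μ →L[ℂ] ℂ) := fun ξ => c ξ • innerSL ℂ (v ξ) with hφ'
  refine ⟨fun k => (Encodable.decode₂ ι k).elim 0 φ',
    fun k => (Encodable.decode₂ ι k).elim 0 u, ?_, ?_⟩
  · intro x
    have hinner : ∀ ξ : ι, (inner ℂ (v ξ) x : ℂ)
        = ∫ a, x a * (starRingEnd ℂ) (v ξ a) ∂μ := by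
      intro ξ
      rw [MeasureTheory.L2.inner_def]
      simp only [RCLike.inner_apply]
    have hvan : ∀ k ∉ Set.range (Encodable.encode : ι → ℕ),
        ((Encodable.decode₂ ι k).elim 0 φ') x • (Encodable.decode₂ ι k).elim 0 u = 0 := by
      intro k hk
      rcases h : Encodable.decode₂ ι k with _ | ξ
      · simp [h]
      · exact absurd ⟨ξ, (Encodable.mem_decode₂.mp h)⟩ hk
    refine (Function.Injective.hasSum_iff Encodable.encode_injective hvan).mp ?_
    have : (fun ξ : ι => ((Encodable.decode₂ ι (Encodable.encode ξ)).elim 0 φ') x •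
        (Encodable.decode₂ ι (Encodable.encode ξ)).elim 0 u)
        = fun ξ => ((((1 - lam ξ) ^ (-(s / m)) : ℝ) : ℂ)
          * ∫ a, x a * (starRingEnd ℂ) (v ξ a) ∂μ) • u ξ := by
      funext ξ
      simp only [Encodable.decode₂_encode, Option.elim, hφ',
        ContinuousLinearMap.smul_apply, innerSL_apply_apply, smul_eq_mul, hinner ξ, hc]
    rw [show ((fun k => ((Encodable.decode₂ ι k).elim 0 φ') x •
        (Encodable.decode₂ ι k).elim 0 u) ∘ (Encodable.encode : ι → ℕ)) = _ from this]
    exact hA x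
  · have hvan : ∀ k ∉ Set.range (Encodable.encode : ι → ℕ),
        ‖(Encodable.decode₂ ι k).elim 0 φ'‖ ^ r * ‖(Encodable.decode₂ ι k).elim 0 u‖ ^ r = 0 := by
      intro k hk
      rcases h : Encodable.decode₂ ι k with _ | ξ
      · simp [h, Real.zero_rpow hr0.ne']
      · exact absurd ⟨ξ, (Encodable.mem_decode₂.mp h)⟩ hk
    refine (Function.Injective.summable_iff Encodable.encode_injective hvan).mp ?_
    have hcomp : ((fun k => ‖(Encodable.decode₂ ι k).elim 0 φ'‖ ^ r *
        ‖(Encodable.decode₂ ι k).elim 0 u‖ ^ r) ∘ (Encodable.encode : ι → ℕ))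
        = fun ξ : ι => ‖φ' ξ‖ ^ r * ‖u ξ‖ ^ r := by
      funext ξ
      simp [Encodable.decode₂_encode]
    rw [hcomp]
    have hsr : s₀ < s * r := by
      have := (div_lt_iff₀ hr0).mp hs; linarith
    refine Summable.of_nonneg_of_le (fun ξ => by positivity) (fun ξ => ?_) hsum
    have h1l : (0:ℝ) < 1 - lam ξ := by have := hlam ξ; linarith
    have ht0 : (0:ℝ) ≤ 1 + lam ξ ^ 2 := by positivity
    have ht1 : (1:ℝ) ≤ 1 + lam ξ ^ 2 := by nlinarith [sq_nonneg (lam ξ)]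
    have hnorm : ‖φ' ξ‖ = (1 - lam ξ) ^ (-(s / m)) := by
      simp only [hφ']
      rw [norm_smul (c ξ) (innerSL ℂ (v ξ)), innerSL_apply_norm, hv ξ, mul_one, hc]
      simp [Complex.norm_real, abs_of_nonneg (Real.rpow_nonneg h1l.le _)]
    rw [hnorm, hu ξ, Real.one_rpow, mul_one, ← Real.rpow_mul h1l.le]
    have hb : (1 + lam ξ ^ 2) ^ ((1:ℝ)/2) ≤ 1 - lam ξ := by
      have h2 : (1 + lam ξ ^ 2) ≤ (1 - lam ξ) ^ 2 := by nlinarith [hlam ξ]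
      calc (1 + lam ξ ^ 2) ^ ((1:ℝ)/2) ≤ ((1 - lam ξ) ^ 2) ^ ((1:ℝ)/2) :=
            Real.rpow_le_rpow ht0 h2 (by norm_num)
        _ = 1 - lam ξ := by
            rw [← Real.rpow_natCast (1 - lam ξ) 2, ← Real.rpow_mul h1l.le]
            norm_num
    have hexp : -(s / m) * r ≤ 0 := by
      have : 0 < s := lt_trans (div_pos hs₀ hr0) hs
      have : 0 ≤ s / m * r := by positivity
      linarith
    calc (1 - lam ξ) ^ (-(s / m) * r)
        ≤ ((1 + lam ξ ^ 2) ^ ((1:ℝ)/2)) ^ (-(s / m) * r) :=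
          Real.rpow_le_rpow_of_nonpos (Real.rpow_pos_of_pos (by linarith) _) hb hexp
      _ = (1 + lam ξ ^ 2) ^ ((1:ℝ)/2 * (-(s / m) * r)) := (Real.rpow_mul ht0 _ _).symm
      _ ≤ (1 + lam ξ ^ 2) ^ ((1 / (2 * m)) * (-s₀)) := by
          refine Real.rpow_le_rpow_of_exponent_le ht1 ?_
          rw [show (1:ℝ)/2 * (-(s / m) * r) = (-(s * r)) / (2 * m) by field_simp,
            show (1 / (2 * m)) * (-s₀) = (-s₀) / (2 * m) by ring]
          exact (div_le_div_iff_of_pos_right (by linarith : (0:ℝ) < 2 * m)).mpr (by linarith)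
      _ = ((1 + lam ξ ^ 2) ^ (1 / (2 * m))) ^ (-s₀) := Real.rpow_mul ht0 _ _
end
end

section
/- Let 0<r≤1 and 1≤p₁≤2≤p₂<∞, with q₁ the conjugate exponent of p₁. Let (M,μ) be a finite measure space, ι a countable index set, w : ι → [1,∞), and (u_ξ)_{ξ∈ι}, (v_ξ)_{ξ∈ι} families in L²(μ)∩L^∞(μ) with ‖u_ξ‖_{L²}=‖v_ξ‖_{L²}=1, ‖u_ξ‖_{L^∞} ≤ C₁·w(ξ)^{ν₁} and ‖v_ξ‖_{L^∞} ≤ C₂·w(ξ)^{ν₂} for all ξ, where C₁,C₂,ν₁,ν₂ > 0. Let σ : M×ι → ℂ be measurable with |σ(x,ξ)| ≤ γ(ξ) for all (x,ξ) and some γ : ι → [0,∞), and assume ∑_{ξ∈ι} ( w(ξ)^{ν₁(1-2/p₂)+ν₂(2/p₁-1)} · γ(ξ) )^r < ∞. Let A : L^{p₁}(μ) → L^{p₂}(μ) be a bounded linear operator such that for every f ∈ L^{p₁}(μ), A f = ∑_{ξ∈ι} (∫_M f·\overline{v_ξ} dμ)·σ(·,ξ)·u_ξ, with the series converging in L^{p₂}(μ).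 Then A is r-nuclear from L^{p₁}(μ) to L^{p₂}(μ). -/
open MeasureTheory
open scoped ENNReal

noncomputable section


/-- Interpolation: if `‖f‖_2 = 1` and `2 ≤ p`, then `‖f‖_p ≤ ‖f‖_∞ ^ (1 - 2/p)`. -/
lemma interp_aux {α : Type*} [MeasurableSpace α] {μ : Measure α} {f : α → ℂ} {p : ℝ≥0∞}
    (h2p : 2 ≤ p) (hf : AEStronglyMeasurable f μ) (hf2 : eLpNorm f 2 μ = 1) :
    eLpNorm f p μ ≤ eLpNorm f ∞ μ ^ (1 - 2 / p.toReal) := by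
  by_cases hp : p = ∞
  · simp [hp]
  have hq2 : (2:ℝ) ≤ p.toReal := by
    have := ENNReal.toReal_mono hp h2p
    simpa using this
  have hq0 : (0:ℝ) < p.toReal := by linarith
  have hp0 : p ≠ 0 := by
    intro h; rw [h] at h2p; simp at h2p
  set q := p.toReal with hqdef
  set S := eLpNorm f ∞ μ with hS
  have hkey : ∫⁻ x, (‖f x‖₊ : ℝ≥0∞) ^ q ∂μ ≤ S ^ (q - 2) := by
    have hae := enorm_ae_le_eLpNormEssSup f μ
    have h1 : ∫⁻ x, (‖f x‖₊ : ℝ≥0∞) ^ q ∂μ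
        ≤ ∫⁻ x, (‖f x‖₊ : ℝ≥0∞) ^ (2:ℝ) * S ^ (q - 2) ∂μ := by
      refine lintegral_mono_ae (hae.mono fun x hx => ?_)
      have : ((‖f x‖₊ : ℝ≥0∞)) ^ q = (‖f x‖₊ : ℝ≥0∞) ^ (2:ℝ) * (‖f x‖₊ : ℝ≥0∞) ^ (q - 2) := by
        rw [← ENNReal.rpow_add_of_nonneg _ _ (by norm_num) (by linarith)]
        ring_nf
      rw [this]
      gcongr
      simpa [S, eLpNorm_exponent_top, enorm_eq_nnnorm] using hx
    have h2 : ∫⁻ x, (‖f x‖₊ : ℝ≥0∞) ^ (2:ℝ) * S ^ (q - 2) ∂μ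
        = (∫⁻ x, (‖f x‖₊ : ℝ≥0∞) ^ (2:ℝ) ∂μ) * S ^ (q - 2) :=
      lintegral_mul_const'' _ (hf.enorm.pow_const _)
    have h3 : ∫⁻ x, (‖f x‖₊ : ℝ≥0∞) ^ (2:ℝ) ∂μ = 1 := by
      have := hf2
      rw [eLpNorm_eq_lintegral_rpow_enorm_toReal (by norm_num) (by norm_num)] at this
      have h4 := congrArg (· ^ (2:ℝ)) this
      simp only [← ENNReal.rpow_mul] at h4
      norm_num at h4
      simpa [enorm_eq_nnnorm] using h4
    calc ∫⁻ x, (‖f x‖₊ : ℝ≥0∞) ^ q ∂μ ≤ _ := h1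
      _ = _ := h2
      _ = S ^ (q - 2) := by rw [h3, one_mul]
  rw [eLpNorm_eq_lintegral_rpow_enorm_toReal hp0 hp]
  calc (∫⁻ x, (‖f x‖₊ : ℝ≥0∞) ^ q ∂μ) ^ (1 / q)
      ≤ (S ^ (q - 2)) ^ (1 / q) := by
        gcongr
    _ = S ^ (1 - 2 / q) := by
        rw [← ENNReal.rpow_mul]
        congr 1
        field_simp

lemma conj_aesm {M : Type*} [MeasurableSpace M] {μ : Measure M} {v : M → ℂ}
    (hv : AEStronglyMeasurable v μ) :
    AEStronglyMeasurable (fun x => (starRingEnd ℂ) (v x)) μ :=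
  RCLike.continuous_conj.comp_aestronglyMeasurable hv

lemma pair_aux {M : Type*} [MeasurableSpace M] {μ : Measure M} [IsFiniteMeasure μ]
    (p₁ q₁ : ℝ≥0∞) [Fact (1 ≤ p₁)] (hq : 1 / p₁ + 1 / q₁ = 1)
    (v : M → ℂ) (hvI : MemLp v ∞ μ) :
    ∃ φ : Lp ℂ p₁ μ →L[ℂ] ℂ,
      (∀ f : Lp ℂ p₁ μ, φ f = ∫ x, f x * (starRingEnd ℂ) (v x) ∂μ) ∧
      ‖φ‖ ≤ (eLpNorm v q₁ μ).toReal := by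
  have hvq : MemLp v q₁ μ := hvI.mono_exponent le_top
  have hpqr : (1:ℝ≥0∞) / 1 = 1 / p₁ + 1 / q₁ := by simpa using hq.symm
  have hmulle : ∀ (f : M → ℂ), AEStronglyMeasurable f μ →
      eLpNorm (fun x => f x * (starRingEnd ℂ) (v x)) 1 μ ≤ eLpNorm f p₁ μ * eLpNorm v q₁ μ := by
    intro f hf
    haveI : ENNReal.HolderTriple p₁ q₁ 1 := ⟨by simpa [one_div] using hq⟩
    have := eLpNorm_le_eLpNorm_mul_eLpNorm'_of_norm (p := p₁) (q := q₁) (r := 1) hf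
      (conj_aesm hvI.aestronglyMeasurable)
      (· * ·) 1 (Filter.Eventually.of_forall fun x => by simp [norm_mul])
    rw [ENNReal.coe_one, one_mul] at this
    refine this.trans_eq ?_
    congr 1
    exact eLpNorm_conj v _ _
  have hmeas : ∀ f : Lp ℂ p₁ μ, AEStronglyMeasurable (fun x => f x * (starRingEnd ℂ) (v x)) μ :=
    fun f => (Lp.memLp f).aestronglyMeasurable.mul (conj_aesm hvI.aestronglyMeasurable)
  have hint : ∀ f : Lp ℂ p₁ μ, Integrable (fun x => f x * (starRingEnd ℂ) (v x)) μ := by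
    intro f
    refine memLp_one_iff_integrable.mp ⟨hmeas f, ?_⟩
    exact (hmulle _ (Lp.memLp f).aestronglyMeasurable).trans_lt
      (ENNReal.mul_lt_top (Lp.memLp f).2 hvq.2)
  set K := (eLpNorm v q₁ μ).toReal with hK
  have hbound : ∀ f : Lp ℂ p₁ μ, ‖∫ x, f x * (starRingEnd ℂ) (v x) ∂μ‖ ≤ K * ‖f‖ := by
    intro f
    calc ‖∫ x, f x * (starRingEnd ℂ) (v x) ∂μ‖
        ≤ ∫ x, ‖f x * (starRingEnd ℂ) (v x)‖ ∂μ := norm_integral_le_integral_norm _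
      _ = (∫⁻ x, ‖f x * (starRingEnd ℂ) (v x)‖₊ ∂μ).toReal :=
          integral_norm_eq_lintegral_enorm (hmeas f)
      _ = (eLpNorm (fun x => f x * (starRingEnd ℂ) (v x)) 1 μ).toReal := by
          rw [eLpNorm_one_eq_lintegral_enorm]; rfl
      _ ≤ (eLpNorm (f : M → ℂ) p₁ μ * eLpNorm v q₁ μ).toReal := by
          refine ENNReal.toReal_mono ?_ (hmulle _ (Lp.memLp f).aestronglyMeasurable)
          exact ENNReal.mul_ne_top (Lp.memLp f).eLpNorm_ne_top hvq.eLpNorm_ne_top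
      _ = ‖f‖ * K := by rw [ENNReal.toReal_mul, Lp.norm_def]
      _ = K * ‖f‖ := mul_comm _ _
  have hadd : ∀ f g : Lp ℂ p₁ μ,
      ∫ x, ((f + g : Lp ℂ p₁ μ) : M → ℂ) x * (starRingEnd ℂ) (v x) ∂μ
      = (∫ x, f x * (starRingEnd ℂ) (v x) ∂μ) + ∫ x, g x * (starRingEnd ℂ) (v x) ∂μ := by
    intro f g
    have hae : (fun x => ((f + g : Lp ℂ p₁ μ) : M → ℂ) x * (starRingEnd ℂ) (v x))
        =ᵐ[μ] fun x => f x * (starRingEnd ℂ) (v x) + g x * (starRingEnd ℂ) (v x) := by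
      filter_upwards [Lp.coeFn_add f g] with x hx
      rw [hx]; simp only [Pi.add_apply]; ring
    rw [integral_congr_ae hae, integral_add (hint f) (hint g)]
  have hsmul : ∀ (c : ℂ) (f : Lp ℂ p₁ μ),
      ∫ x, ((c • f : Lp ℂ p₁ μ) : M → ℂ) x * (starRingEnd ℂ) (v x) ∂μ
      = c * ∫ x, f x * (starRingEnd ℂ) (v x) ∂μ := by
    intro c f
    have hae : (fun x => ((c • f : Lp ℂ p₁ μ) : M → ℂ) x * (starRingEnd ℂ) (v x))
        =ᵐ[μ] fun x => c * (f x * (starRingEnd ℂ) (v x)) := by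
      filter_upwards [Lp.coeFn_smul c f] with x hx
      rw [hx]; simp only [Pi.smul_apply, smul_eq_mul]; ring
    rw [integral_congr_ae hae, integral_const_mul]
  let L : Lp ℂ p₁ μ →ₗ[ℂ] ℂ :=
    { toFun := fun f => ∫ x, f x * (starRingEnd ℂ) (v x) ∂μ
      map_add' := hadd
      map_smul' := hsmul }
  refine ⟨L.mkContinuous K hbound, fun f => rfl, ?_⟩
  exact L.mkContinuous_norm_le ENNReal.toReal_nonneg hbound


theorem statement_9
    {M : Type*} [MeasurableSpace M] {μ : Measure M} [IsFiniteMeasure μ]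
    {ι : Type*} [Countable ι]
    (r : ℝ) (hr0 : 0 < r) (hr1 : r ≤ 1)
    (p₁ p₂ q₁ : ℝ≥0∞) [Fact (1 ≤ p₁)] [Fact (1 ≤ p₂)] [Fact (1 ≤ q₁)]
    (hp₁2 : p₁ ≤ 2) (h2p₂ : 2 ≤ p₂) (hp₂' : p₂ ≠ ∞)
    (hq : 1 / p₁ + 1 / q₁ = 1)
    (w : ι → ℝ) (hw : ∀ ξ, 1 ≤ w ξ)
    (C₁ C₂ ν₁ ν₂ : ℝ) (hC₁ : 0 < C₁) (hC₂ : 0 < C₂) (hν₁ : 0 < ν₁) (hν₂ : 0 < ν₂)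
    (u v : ι → M → ℂ)
    (hu2 : ∀ ξ, MemLp (u ξ) 2 μ) (hv2 : ∀ ξ, MemLp (v ξ) 2 μ)
    (huI : ∀ ξ, MemLp (u ξ) ∞ μ) (hvI : ∀ ξ, MemLp (v ξ) ∞ μ)
    (hun : ∀ ξ, eLpNorm (u ξ) 2 μ = 1) (hvn : ∀ ξ, eLpNorm (v ξ) 2 μ = 1)
    (hub : ∀ ξ, eLpNorm (u ξ) ∞ μ ≤ ENNReal.ofReal (C₁ * w ξ ^ ν₁))
    (hvb : ∀ ξ, eLpNorm (v ξ) ∞ μ ≤ ENNReal.ofReal (C₂ * w ξ ^ ν₂))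
    (σ : ι → M → ℂ) (hσm : ∀ ξ, AEStronglyMeasurable (σ ξ) μ)
    (γ : ι → ℝ) (hγ : ∀ ξ x, ‖σ ξ x‖ ≤ γ ξ)
    (hsum : Summable fun ξ =>
      (w ξ ^ (ν₁ * (1 - 2 / p₂.toReal) + ν₂ * (2 / p₁.toReal - 1)) * γ ξ) ^ r)
    (hmem : ∀ ξ, MemLp (fun x => σ ξ x * u ξ x) p₂ μ)
    (A : Lp ℂ p₁ μ →L[ℂ] Lp ℂ p₂ μ)
    (hA : ∀ f : Lp ℂ p₁ μ,
      HasSum (fun ξ => (∫ x, f x * (starRingEnd ℂ) (v ξ x) ∂μ)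
        • MemLp.toLp (fun x => σ ξ x * u ξ x) (hmem ξ)) (A f)) :
    IsRNuclear r A := by
  classical
  letI : Encodable ι := Encodable.ofCountable ι
  -- γ is nonnegative
  have hγ0 : ∀ ξ, 0 ≤ γ ξ := by
    intro ξ
    rcases isEmpty_or_nonempty M with hM | hM
    · exfalso
      have hμ : μ = 0 := μ.eq_zero_of_isEmpty
      have h := hun ξ
      rw [hμ] at h
      simp at h
    · exact le_trans (norm_nonneg _) (hγ ξ hM.some)
  -- exponents
  set e₁ : ℝ := 1 - 2 / p₂.toReal with he₁
  set e₂ : ℝ := 2 / p₁.toReal - 1 with he₂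
  have hp₁top : p₁ ≠ ∞ := ne_top_of_le_ne_top (by simp) hp₁2
  have hp₁0 : p₁ ≠ 0 := by
    have : (1:ℝ≥0∞) ≤ p₁ := Fact.out
    intro h; rw [h] at this; simp at this
  have ha1 : (1:ℝ) ≤ p₁.toReal := by
    have := ENNReal.toReal_mono hp₁top (Fact.out : (1:ℝ≥0∞) ≤ p₁)
    simpa using this
  have ha2 : p₁.toReal ≤ 2 := by
    have := ENNReal.toReal_mono (by simp) hp₁2
    simpa using this
  have hb2 : (2:ℝ) ≤ p₂.toReal := by
    have := ENNReal.toReal_mono hp₂' h2p₂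
    simpa using this
  have he₁0 : 0 ≤ e₁ := by
    rw [he₁, sub_nonneg]
    rw [div_le_one (by linarith)]
    linarith
  have he₂0 : 0 ≤ e₂ := by
    rw [he₂, sub_nonneg, le_div_iff₀ (by linarith)]
    linarith
  -- 2 ≤ q₁
  have h2q₁ : (2:ℝ≥0∞) ≤ q₁ := by
    have h12 : (1:ℝ≥0∞)/2 ≤ 1/p₁ := by
      rw [one_div, one_div]
      exact ENNReal.inv_le_inv' hp₁2
    have : 1/2 + 1/q₁ ≤ (1:ℝ≥0∞) := le_trans (add_le_add h12 le_rfl) hq.le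
    nth_rewrite 3 [← ENNReal.add_halves 1] at this
    have hht : (1:ℝ≥0∞)/2 ≠ ⊤ := by norm_num
    have hq12 : (1:ℝ≥0∞)/q₁ ≤ 1/2 :=
      (ENNReal.add_le_add_iff_left hht).mp this
    rw [one_div, one_div] at hq12
    exact ENNReal.inv_le_inv.mp hq12
  have hq₁0 : q₁ ≠ 0 := by
    intro h; rw [h] at h2q₁; simp at h2q₁
  -- exponent identity : 1 - 2 / q₁.toReal = e₂
  have hexp : 1 - 2 / q₁.toReal = e₂ := by
    by_cases hq₁top : q₁ = ∞
    · have hp₁1 : p₁ = 1 := by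
        rw [hq₁top] at hq
        rw [ENNReal.div_top, add_zero, one_div] at hq
        have := congrArg (·⁻¹) hq
        simpa using this
      rw [hq₁top, he₂, hp₁1]
      norm_num
    · have h1 : (1:ℝ)/p₁.toReal + 1/q₁.toReal = 1 := by
        have := congrArg ENNReal.toReal hq
        rw [ENNReal.toReal_add (by simp [hp₁0]) (by simp [hq₁0])] at this
        rw [ENNReal.toReal_div, ENNReal.toReal_div] at this
        simpa using this
      have hb0 : (0:ℝ) < q₁.toReal := by
        have := ENNReal.toReal_mono hq₁top h2q₁
        simp at this; linarith
      have ha0 : (0:ℝ) < p₁.toReal := by linarith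
      rw [he₂]
      have h2a : (2:ℝ)/p₁.toReal = 2 * (1/p₁.toReal) := by ring
      have h2b : (2:ℝ)/q₁.toReal = 2 * (1/q₁.toReal) := by ring
      rw [h2a, h2b]
      linarith
  -- the functionals
  choose φ hφ hφn using fun ξ => pair_aux p₁ q₁ hq (v ξ) (hvI ξ)
  set y : ι → Lp ℂ p₂ μ := fun ξ => MemLp.toLp (fun x => σ ξ x * u ξ x) (hmem ξ) with hy
  -- norm bound for φ
  have hφb : ∀ ξ, ‖φ ξ‖ ≤ (C₂ * w ξ ^ ν₂) ^ e₂ := by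
    intro ξ
    have hwpos : (0:ℝ) < w ξ := lt_of_lt_of_le one_pos (hw ξ)
    have hCpos : (0:ℝ) < C₂ * w ξ ^ ν₂ := mul_pos hC₂ (Real.rpow_pos_of_pos hwpos _)
    have hchain : eLpNorm (v ξ) q₁ μ ≤ ENNReal.ofReal ((C₂ * w ξ ^ ν₂) ^ e₂) := by
      calc eLpNorm (v ξ) q₁ μ
          ≤ eLpNorm (v ξ) ∞ μ ^ (1 - 2 / q₁.toReal) :=
            interp_aux h2q₁ (hv2 ξ).aestronglyMeasurable (hvn ξ)
        _ = eLpNorm (v ξ) ∞ μ ^ e₂ := by rw [hexp]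
        _ ≤ (ENNReal.ofReal (C₂ * w ξ ^ ν₂)) ^ e₂ := by
            gcongr
            exact hvb ξ
        _ = ENNReal.ofReal ((C₂ * w ξ ^ ν₂) ^ e₂) := by
            rw [← ENNReal.ofReal_rpow_of_pos hCpos]
    refine le_trans (hφn ξ) ?_
    have := ENNReal.toReal_mono (by simp) hchain
    rwa [ENNReal.toReal_ofReal (Real.rpow_nonneg hCpos.le _)] at this
  -- norm bound for y
  have hyb : ∀ ξ, ‖y ξ‖ ≤ γ ξ * (C₁ * w ξ ^ ν₁) ^ e₁ := by
    intro ξ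
    have hwpos : (0:ℝ) < w ξ := lt_of_lt_of_le one_pos (hw ξ)
    have hCpos : (0:ℝ) < C₁ * w ξ ^ ν₁ := mul_pos hC₁ (Real.rpow_pos_of_pos hwpos _)
    have hchain : eLpNorm (fun x => σ ξ x * u ξ x) p₂ μ
        ≤ ENNReal.ofReal (γ ξ * (C₁ * w ξ ^ ν₁) ^ e₁) := by
      calc eLpNorm (fun x => σ ξ x * u ξ x) p₂ μ
          ≤ eLpNorm (σ ξ) ∞ μ * eLpNorm (u ξ) p₂ μ := by
            have := eLpNorm_le_eLpNorm_top_mul_eLpNorm p₂ (σ ξ) (hu2 ξ).aestronglyMeasurable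
              (· * ·) 1 (Filter.Eventually.of_forall fun x => by simp [nnnorm_mul])
            rwa [ENNReal.coe_one, one_mul] at this
        _ ≤ ENNReal.ofReal (γ ξ) * (ENNReal.ofReal (C₁ * w ξ ^ ν₁)) ^ e₁ := by
            gcongr
            · rw [eLpNorm_exponent_top]
              exact eLpNormEssSup_le_of_ae_bound (Filter.Eventually.of_forall (hγ ξ))
            · calc eLpNorm (u ξ) p₂ μ
                  ≤ eLpNorm (u ξ) ∞ μ ^ (1 - 2 / p₂.toReal) :=
                    interp_aux h2p₂ (hu2 ξ).aestronglyMeasurable (hun ξ)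
                _ ≤ (ENNReal.ofReal (C₁ * w ξ ^ ν₁)) ^ e₁ := by
                    rw [← he₁]
                    gcongr
                    exact hub ξ
        _ = ENNReal.ofReal (γ ξ * (C₁ * w ξ ^ ν₁) ^ e₁) := by
            rw [ENNReal.ofReal_rpow_of_pos hCpos, ← ENNReal.ofReal_mul (hγ0 ξ)]
    have h1 : ‖y ξ‖ = (eLpNorm (fun x => σ ξ x * u ξ x) p₂ μ).toReal := Lp.norm_toLp _ _
    rw [h1]
    have := ENNReal.toReal_mono (by simp) hchain
    rwa [ENNReal.toReal_ofReal
      (mul_nonneg (hγ0 ξ) (Real.rpow_nonneg hCpos.le _))] at this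
  -- combined product bound
  set K : ℝ := C₁ ^ e₁ * C₂ ^ e₂ with hKdef
  have hK0 : 0 ≤ K := mul_nonneg (Real.rpow_nonneg hC₁.le _) (Real.rpow_nonneg hC₂.le _)
  have hprod : ∀ ξ, ‖φ ξ‖ * ‖y ξ‖ ≤ K * (w ξ ^ (ν₁ * e₁ + ν₂ * e₂) * γ ξ) := by
    intro ξ
    have hwpos : (0:ℝ) < w ξ := lt_of_lt_of_le one_pos (hw ξ)
    calc ‖φ ξ‖ * ‖y ξ‖
        ≤ (C₂ * w ξ ^ ν₂) ^ e₂ * (γ ξ * (C₁ * w ξ ^ ν₁) ^ e₁) :=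
          mul_le_mul (hφb ξ) (hyb ξ) (norm_nonneg _)
            (Real.rpow_nonneg (mul_nonneg hC₂.le (Real.rpow_nonneg hwpos.le _)) _)
      _ = K * (w ξ ^ (ν₁ * e₁ + ν₂ * e₂) * γ ξ) := by
          rw [Real.mul_rpow hC₂.le (Real.rpow_nonneg hwpos.le _),
            Real.mul_rpow hC₁.le (Real.rpow_nonneg hwpos.le _),
            ← Real.rpow_mul hwpos.le, ← Real.rpow_mul hwpos.le,
            Real.rpow_add hwpos, hKdef]
          ring
  -- summability over ι
  have hsum' : Summable (fun ξ => ‖φ ξ‖ ^ r * ‖y ξ‖ ^ r) := by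
    refine Summable.of_nonneg_of_le
      (fun ξ => mul_nonneg (Real.rpow_nonneg (norm_nonneg _) _)
        (Real.rpow_nonneg (norm_nonneg _) _))
      (fun ξ => ?_) (hsum.mul_left (K ^ r))
    rw [← Real.mul_rpow (norm_nonneg _) (norm_nonneg _)]
    have hwpos : (0:ℝ) < w ξ := lt_of_lt_of_le one_pos (hw ξ)
    calc (‖φ ξ‖ * ‖y ξ‖) ^ r
        ≤ (K * (w ξ ^ (ν₁ * e₁ + ν₂ * e₂) * γ ξ)) ^ r :=
          Real.rpow_le_rpow (mul_nonneg (norm_nonneg _) (norm_nonneg _)) (hprod ξ) hr0.le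
      _ = K ^ r * (w ξ ^ (ν₁ * e₁ + ν₂ * e₂) * γ ξ) ^ r :=
          Real.mul_rpow hK0 (mul_nonneg (Real.rpow_nonneg hwpos.le _) (hγ0 ξ))
  -- HasSum over ι
  have hHS : ∀ f : Lp ℂ p₁ μ, HasSum (fun ξ => φ ξ f • y ξ) (A f) := by
    intro f
    have heq : (fun ξ => φ ξ f • y ξ)
        = fun ξ => (∫ x, f x * (starRingEnd ℂ) (v ξ x) ∂μ)
            • MemLp.toLp (fun x => σ ξ x * u ξ x) (hmem ξ) := by
      funext ξ
      rw [hφ ξ f]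
    rw [heq]
    exact hA f
  -- reindex by ℕ
  set Φ : ℕ → (Lp ℂ p₁ μ →L[ℂ] ℂ) := fun k => (Encodable.decode₂ ι k).elim 0 φ with hΦ
  set Y : ℕ → Lp ℂ p₂ μ := fun k => (Encodable.decode₂ ι k).elim 0 y with hY
  have hinj : Function.Injective (Encodable.encode : ι → ℕ) := Encodable.encode_injective
  have hnone : ∀ k ∉ Set.range (Encodable.encode : ι → ℕ), Encodable.decode₂ ι k = none := by
    intro k hk
    by_contra h
    exact hk (Encodable.decode₂_ne_none_iff.mp h)
  refine ⟨Φ, Y, fun f => ?_, ?_⟩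
  · have h0 : ∀ k ∉ Set.range (Encodable.encode : ι → ℕ), Φ k f • Y k = 0 := by
      intro k hk
      simp [hΦ, hY, hnone k hk]
    have hcomp : (fun k => Φ k f • Y k) ∘ (Encodable.encode : ι → ℕ)
        = fun ξ => φ ξ f • y ξ := by
      funext ξ
      simp [hΦ, hY, Function.comp, Encodable.decode₂_encode]
    refine (hinj.hasSum_iff h0).mp ?_
    rw [hcomp]
    exact hHS f
  · have h0 : ∀ k ∉ Set.range (Encodable.encode : ι → ℕ), ‖Φ k‖ ^ r * ‖Y k‖ ^ r = 0 := by
      intro k hk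
      simp [hΦ, hY, hnone k hk, Real.zero_rpow hr0.ne']
    have hcomp : (fun k => ‖Φ k‖ ^ r * ‖Y k‖ ^ r) ∘ (Encodable.encode : ι → ℕ)
        = fun ξ => ‖φ ξ‖ ^ r * ‖y ξ‖ ^ r := by
      funext ξ
      simp [hΦ, hY, Function.comp, Encodable.decode₂_encode]
    refine (hinj.summable_iff h0).mp ?_
    rw [hcomp]
    exact hsum'
end
end

section
/- Let 0<r≤1, 2≤p₁<∞ and 1≤p₂≤2, with q₁ the conjugate exponent of p₁. Let (M,μ) be a finite measure space, ι a countable index set, and (u_ξ)_{ξ∈ι}, (v_ξ)_{ξ∈ι} families in L²(μ) with ‖u_ξ‖_{L²}=‖v_ξ‖_{L²}=1 for all ξ. Let σ : M×ι → ℂ be measurable with |σ(x,ξ)| ≤ γ(ξ) for all (x,ξ) and some γ : ι → [0,∞) satisfying ∑_{ξ∈ι} γ(ξ)^r < ∞. Let A : L^{p₁}(μ) → L^{p₂}(μ) be a bounded linear operator such that for every f ∈ L^{p₁}(μ), A f = ∑_{ξ∈ι} (∫_M f·\overline{v_ξ} dμ)·σ(·,ξ)·u_ξ, with the series converging in L^{p₂}(μ).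 Then A is r-nuclear from L^{p₁}(μ) to L^{p₂}(μ). -/
open MeasureTheory
open scoped ENNReal
open scoped NNReal

noncomputable section

namespace Stmt10Aux

variable {M : Type*} [MeasurableSpace M] {μ : Measure M}

theorem pairing_integrable (p q : ℝ≥0∞) (hpq : (1:ℝ≥0∞)/1 = 1/p + 1/q)
    [Fact (1 ≤ p)] (w : M → ℂ) (hw : MemLp w q μ) (f : Lp ℂ p μ) :
    Integrable (fun x => f x * w x) μ := by
  have h := hw.smul (Lp.memLp f) (hpqr := (⟨by simpa [one_div] using hpq.symm⟩ : ENNReal.HolderTriple p q 1))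
  rw [memLp_one_iff_integrable] at h
  exact h

def pairingCLM (p q : ℝ≥0∞) (hpq : (1:ℝ≥0∞)/1 = 1/p + 1/q)
    [Fact (1 ≤ p)] (w : M → ℂ) (hw : MemLp w q μ) : Lp ℂ p μ →L[ℂ] ℂ :=
  LinearMap.mkContinuous
    { toFun := fun f => ∫ x, f x * w x ∂μ
      map_add' := fun f g => by
        rw [← integral_add (pairing_integrable p q hpq w hw f)
          (pairing_integrable p q hpq w hw g)]
        refine integral_congr_ae ?_
        filter_upwards [Lp.coeFn_add f g] with x hx
        rw [hx]; simp [add_mul]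
      map_smul' := fun c f => by
        rw [RingHom.id_apply, ← integral_smul]
        refine integral_congr_ae ?_
        filter_upwards [Lp.coeFn_smul c f] with x hx
        simp [hx, mul_assoc] }
    (eLpNorm w q μ).toReal
    (fun f => by
      simp only [LinearMap.coe_mk, AddHom.coe_mk]
      calc ‖∫ x, f x * w x ∂μ‖ ≤ ∫ x, ‖f x * w x‖ ∂μ := norm_integral_le_integral_norm _
        _ = (eLpNorm (fun x => f x * w x) 1 μ).toReal := by
            rw [integral_norm_eq_lintegral_enorm
              (pairing_integrable p q hpq w hw f).aestronglyMeasurable,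
              eLpNorm_one_eq_lintegral_enorm]
        _ ≤ (eLpNorm (⇑f) p μ * eLpNorm w q μ).toReal := by
            refine ENNReal.toReal_mono
              (ENNReal.mul_ne_top (Lp.memLp f).eLpNorm_ne_top hw.eLpNorm_ne_top) ?_
            have := eLpNorm_smul_le_mul_eLpNorm (f := w) (φ := ⇑f)
              hw.aestronglyMeasurable (Lp.aestronglyMeasurable f) (hpqr := (⟨by simpa [one_div] using hpq.symm⟩ : ENNReal.HolderTriple p q 1))
            exact this
        _ = (eLpNorm w q μ).toReal * ‖f‖ := by
            rw [ENNReal.toReal_mul, Lp.norm_def, mul_comm])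

theorem pairingCLM_apply (p q : ℝ≥0∞) (hpq : (1:ℝ≥0∞)/1 = 1/p + 1/q)
    [Fact (1 ≤ p)] (w : M → ℂ) (hw : MemLp w q μ) (f : Lp ℂ p μ) :
    pairingCLM p q hpq w hw f = ∫ x, f x * w x ∂μ := rfl

theorem pairingCLM_norm_le (p q : ℝ≥0∞) (hpq : (1:ℝ≥0∞)/1 = 1/p + 1/q)
    [Fact (1 ≤ p)] (w : M → ℂ) (hw : MemLp w q μ) :
    ‖pairingCLM p q hpq w hw‖ ≤ (eLpNorm w q μ).toReal :=
  LinearMap.mkContinuous_norm_le _ ENNReal.toReal_nonneg _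

end Stmt10Aux

theorem statement_10
    {M : Type*} [MeasurableSpace M] {μ : Measure M} [IsFiniteMeasure μ]
    {ι : Type*} [Countable ι]
    (r : ℝ) (hr0 : 0 < r) (hr1 : r ≤ 1)
    (p₁ p₂ q₁ : ℝ≥0∞) [Fact (1 ≤ p₁)] [Fact (1 ≤ p₂)] [Fact (1 ≤ q₁)]
    (h2p₁ : 2 ≤ p₁) (hp₁' : p₁ ≠ ∞) (hp₂2 : p₂ ≤ 2)
    (hq : 1 / p₁ + 1 / q₁ = 1)
    (u v : ι → M → ℂ)
    (hu2 : ∀ ξ, MemLp (u ξ) 2 μ) (hv2 : ∀ ξ, MemLp (v ξ) 2 μ)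
    (hun : ∀ ξ, eLpNorm (u ξ) 2 μ = 1) (hvn : ∀ ξ, eLpNorm (v ξ) 2 μ = 1)
    (σ : ι → M → ℂ) (hσm : ∀ ξ, AEStronglyMeasurable (σ ξ) μ)
    (γ : ι → ℝ) (hγ : ∀ ξ x, ‖σ ξ x‖ ≤ γ ξ)
    (hsum : Summable fun ξ => γ ξ ^ r)
    (hmem : ∀ ξ, MemLp (fun x => σ ξ x * u ξ x) p₂ μ)
    (A : Lp ℂ p₁ μ →L[ℂ] Lp ℂ p₂ μ)
    (hA : ∀ f : Lp ℂ p₁ μ,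
      HasSum (fun ξ => (∫ x, f x * (starRingEnd ℂ) (v ξ x) ∂μ)
        • MemLp.toLp (fun x => σ ξ x * u ξ x) (hmem ξ)) (A f)) :
    IsRNuclear r A := by
  classical
  -- trivial case: empty index type
  rcases isEmpty_or_nonempty ι with hι | hι
  · refine ⟨0, 0, fun f => ?_, ?_⟩
    · have h0 : A f = 0 := (hA f).unique hasSum_empty
      rw [h0]
      simpa using hasSum_zero
    · simpa [Real.zero_rpow hr0.ne'] using summable_zero
  obtain ⟨ξ₀⟩ := hι
  obtain ⟨e, he⟩ := Countable.exists_injective_nat ι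
  -- basic exponent facts
  have hq₁1 : (1:ℝ≥0∞) ≤ q₁ := Fact.out
  have hp₂1 : (1:ℝ≥0∞) ≤ p₂ := Fact.out
  have hq12 : q₁ ≤ 2 := by
    have h1 : (1:ℝ≥0∞) ≤ 1/2 + 1/q₁ := by
      calc (1:ℝ≥0∞) = 1/p₁ + 1/q₁ := hq.symm
        _ ≤ 1/2 + 1/q₁ := by gcongr
    have h2 : (1:ℝ≥0∞) - 1/2 ≤ 1/q₁ := tsub_le_iff_left.mpr h1
    rw [ENNReal.sub_half ENNReal.one_ne_top] at h2
    rw [one_div, one_div] at h2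
    exact ENNReal.inv_le_inv.mp h2
  have hq₁0 : q₁ ≠ 0 := (lt_of_lt_of_le zero_lt_one hq₁1).ne'
  have hq₁top : q₁ ≠ ∞ := (hq12.trans_lt (by norm_num)).ne
  have hp₂0 : p₂ ≠ 0 := (lt_of_lt_of_le zero_lt_one hp₂1).ne'
  have hp₂top : p₂ ≠ ∞ := (hp₂2.trans_lt (by norm_num)).ne
  have hpq' : (1:ℝ≥0∞)/1 = 1/p₁ + 1/q₁ := by rw [hq]; norm_num
  -- measure-related constants
  have h2toReal : ((2:ℝ≥0∞)).toReal = 2 := by norm_num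
  have hq₁R : 0 < q₁.toReal := ENNReal.toReal_pos hq₁0 hq₁top
  have hq₁R2 : q₁.toReal ≤ 2 := by
    have := ENNReal.toReal_mono (by norm_num : (2:ℝ≥0∞) ≠ ∞) hq12
    simpa [h2toReal] using this
  have hp₂R : 0 < p₂.toReal := ENNReal.toReal_pos hp₂0 hp₂top
  have hp₂R2 : p₂.toReal ≤ 2 := by
    have := ENNReal.toReal_mono (by norm_num : (2:ℝ≥0∞) ≠ ∞) hp₂2
    simpa [h2toReal] using this
  set C1 : ℝ≥0∞ := μ Set.univ ^ (1/q₁.toReal - 1/(2:ℝ≥0∞).toReal) with hC1def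
  set C2 : ℝ≥0∞ := μ Set.univ ^ (1/p₂.toReal - 1/(2:ℝ≥0∞).toReal) with hC2def
  have hexp1 : 0 ≤ 1/q₁.toReal - 1/(2:ℝ≥0∞).toReal := by
    rw [h2toReal]
    have := one_div_le_one_div_of_le hq₁R hq₁R2
    linarith
  have hexp2 : 0 ≤ 1/p₂.toReal - 1/(2:ℝ≥0∞).toReal := by
    rw [h2toReal]
    have := one_div_le_one_div_of_le hp₂R hp₂R2
    linarith
  have hC1top : C1 ≠ ∞ := by
    exact (ENNReal.rpow_lt_top_of_nonneg hexp1 (measure_ne_top μ _)).ne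
  have hC2top : C2 ≠ ∞ := by
    exact (ENNReal.rpow_lt_top_of_nonneg hexp2 (measure_ne_top μ _)).ne
  -- γ is nonnegative
  have hM : Nonempty M := by
    by_contra h
    rw [not_nonempty_iff] at h
    have : μ = 0 := Subsingleton.eq_zero μ
    have h1 := hun ξ₀
    rw [this] at h1
    simp at h1
  have hγ0 : ∀ ξ, 0 ≤ γ ξ := fun ξ => (norm_nonneg _).trans (hγ ξ hM.some)
  -- the functionals and vectors
  have hw : ∀ ξ, MemLp (fun x => (starRingEnd ℂ) (v ξ x)) q₁ μ := by
    intro ξ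
    have h2 := (hv2 ξ).mono_exponent hq12
    refine ⟨Complex.continuous_conj.comp_aestronglyMeasurable h2.1, ?_⟩
    have heq : eLpNorm (fun x => (starRingEnd ℂ) (v ξ x)) q₁ μ = eLpNorm (v ξ) q₁ μ :=
      eLpNorm_congr_norm_ae (Filter.Eventually.of_forall fun x => by
        simp [RCLike.norm_conj])
    rw [heq]; exact h2.2
  set F : ι → (Lp ℂ p₁ μ →L[ℂ] ℂ) :=
    fun ξ => Stmt10Aux.pairingCLM p₁ q₁ hpq' _ (hw ξ) with hFdef
  set Y : ι → Lp ℂ p₂ μ := fun ξ => (hmem ξ).toLp _ with hYdef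
  -- norm bounds
  have hF : ∀ ξ, ‖F ξ‖ ≤ C1.toReal := by
    intro ξ
    refine (Stmt10Aux.pairingCLM_norm_le p₁ q₁ hpq' _ (hw ξ)).trans ?_
    refine ENNReal.toReal_mono hC1top ?_
    have heq : eLpNorm (fun x => (starRingEnd ℂ) (v ξ x)) q₁ μ = eLpNorm (v ξ) q₁ μ :=
      eLpNorm_congr_norm_ae (Filter.Eventually.of_forall fun x => by
        simp [RCLike.norm_conj])
    rw [heq]
    calc eLpNorm (v ξ) q₁ μ
        ≤ eLpNorm (v ξ) 2 μ * μ Set.univ ^ (1/q₁.toReal - 1/(2:ℝ≥0∞).toReal) :=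
          eLpNorm_le_eLpNorm_mul_rpow_measure_univ hq12 (hv2 ξ).1
      _ = C1 := by rw [hvn ξ, one_mul]
  have hY : ∀ ξ, ‖Y ξ‖ ≤ γ ξ * C2.toReal := by
    intro ξ
    rw [hYdef]
    rw [Lp.norm_toLp]
    have hbound : eLpNorm (fun x => σ ξ x * u ξ x) p₂ μ ≤
        (γ ξ).toNNReal • eLpNorm (u ξ) p₂ μ := by
      refine eLpNorm_le_nnreal_smul_eLpNorm_of_ae_le_mul
        (Filter.Eventually.of_forall fun x => ?_) p₂
      rw [← NNReal.coe_le_coe]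
      push_cast
      rw [Real.coe_toNNReal _ (hγ0 ξ)]
      calc ‖σ ξ x * u ξ x‖ = ‖σ ξ x‖ * ‖u ξ x‖ := norm_mul _ _
        _ ≤ γ ξ * ‖u ξ x‖ := by
            exact mul_le_mul_of_nonneg_right (hγ ξ x) (norm_nonneg _)
    have hu' : eLpNorm (u ξ) p₂ μ ≤ C2 := by
      calc eLpNorm (u ξ) p₂ μ
          ≤ eLpNorm (u ξ) 2 μ * μ Set.univ ^ (1/p₂.toReal - 1/(2:ℝ≥0∞).toReal) :=
            eLpNorm_le_eLpNorm_mul_rpow_measure_univ hp₂2 (hu2 ξ).1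
        _ = C2 := by rw [hun ξ, one_mul]
    have hfin : ((γ ξ).toNNReal : ℝ≥0∞) * C2 ≠ ∞ :=
      ENNReal.mul_ne_top ENNReal.coe_ne_top hC2top
    have hmain : eLpNorm (fun x => σ ξ x * u ξ x) p₂ μ ≤ ((γ ξ).toNNReal : ℝ≥0∞) * C2 := by
      refine hbound.trans ?_
      rw [ENNReal.smul_def, smul_eq_mul]
      exact mul_le_mul_right hu' _
    refine (ENNReal.toReal_mono hfin hmain).trans ?_
    rw [ENNReal.toReal_mul, ENNReal.coe_toReal, Real.coe_toNNReal _ (hγ0 ξ)]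
  -- assemble
  refine ⟨Function.extend e F 0, Function.extend e Y 0, ?_, ?_⟩
  · intro f
    have hzero : ∀ k ∉ Set.range e,
        (fun k => Function.extend e F 0 k f • Function.extend e Y 0 k) k = 0 := by
      intro k hk
      have h1 : Function.extend e F 0 k = 0 :=
        Function.extend_apply' _ _ _ (by simpa [Set.mem_range] using hk)
      simp [h1]
    refine (he.hasSum_iff hzero).mp ?_
    have hcomp : ((fun k => Function.extend e F 0 k f • Function.extend e Y 0 k) ∘ e) =
        fun ξ => (∫ x, f x * (starRingEnd ℂ) (v ξ x) ∂μ)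
          • MemLp.toLp (fun x => σ ξ x * u ξ x) (hmem ξ) := by
      funext ξ
      simp only [Function.comp_apply, he.extend_apply]
      rfl
    rw [hcomp]
    exact hA f
  · have hzero : ∀ k ∉ Set.range e,
        (fun k => ‖Function.extend e F 0 k‖ ^ r * ‖Function.extend e Y 0 k‖ ^ r) k = 0 := by
      intro k hk
      have h1 : Function.extend e F 0 k = 0 :=
        Function.extend_apply' _ _ _ (by simpa [Set.mem_range] using hk)
      simp [h1, Real.zero_rpow hr0.ne']
    refine (he.summable_iff hzero).mp ?_
    have hcomp : ((fun k => ‖Function.extend e F 0 k‖ ^ r * ‖Function.extend e Y 0 k‖ ^ r) ∘ e) =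
        fun ξ => ‖F ξ‖ ^ r * ‖Y ξ‖ ^ r := by
      funext ξ
      simp only [Function.comp_apply, he.extend_apply]
    rw [hcomp]
    refine Summable.of_nonneg_of_le
      (fun ξ => mul_nonneg (Real.rpow_nonneg (norm_nonneg _) r)
        (Real.rpow_nonneg (norm_nonneg _) r))
      (fun ξ => ?_) (hsum.mul_left (C1.toReal ^ r * C2.toReal ^ r))
    have h1 : ‖F ξ‖ ^ r ≤ C1.toReal ^ r :=
      Real.rpow_le_rpow (norm_nonneg _) (hF ξ) hr0.le
    have h2 : ‖Y ξ‖ ^ r ≤ γ ξ ^ r * C2.toReal ^ r := by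
      calc ‖Y ξ‖ ^ r ≤ (γ ξ * C2.toReal) ^ r :=
            Real.rpow_le_rpow (norm_nonneg _) (hY ξ) hr0.le
        _ = γ ξ ^ r * C2.toReal ^ r := Real.mul_rpow (hγ0 ξ) ENNReal.toReal_nonneg
    calc ‖F ξ‖ ^ r * ‖Y ξ‖ ^ r
        ≤ C1.toReal ^ r * (γ ξ ^ r * C2.toReal ^ r) :=
          mul_le_mul h1 h2 (Real.rpow_nonneg (norm_nonneg _) r)
            (Real.rpow_nonneg ENNReal.toReal_nonneg r)
      _ = C1.toReal ^ r * C2.toReal ^ r * γ ξ ^ r := by ring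
end
end

section
/- Let 0<r≤1, 2≤p<∞, s₀>0 and s ≥ ν₁·(p-2)/p + s₀/r. Let (M,μ) be a finite measure space, ι a countable index set, w : ι → [1,∞) with ∑_{ξ∈ι} w(ξ)^{-s₀} < ∞, and (u_ξ)_{ξ∈ι}, (v_ξ)_{ξ∈ι} families in L²(μ)∩L^∞(μ) with ‖u_ξ‖_{L²}=‖v_ξ‖_{L²}=1 and ‖u_ξ‖_{L^∞} ≤ C₁·w(ξ)^{ν₁} for all ξ, where C₁,ν₁ > 0. Let σ : M×ι → ℂ be measurable with |σ(x,ξ)| ≤ C·w(ξ)^{-s} for all (x,ξ) and some C>0. Let A : L^{p}(μ) → L^{p}(μ) be a bounded linear operator such that for every f ∈ L^{p}(μ), A f = ∑_{ξ∈ι} (∫_M f·\overline{v_ξ} dμ)·σ(·,ξ)·u_ξ, with the series converging in L^{p}(μ). Then A is r-nuclear from L^{p}(μ) to L^{p}(μ). -/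
open MeasureTheory
open scoped ENNReal

noncomputable section

theorem statement_11
    {M : Type*} [MeasurableSpace M] {μ : Measure M} [IsFiniteMeasure μ]
    {ι : Type*} [Countable ι]
    (r : ℝ) (hr0 : 0 < r) (hr1 : r ≤ 1)
    (p : ℝ≥0∞) [Fact (1 ≤ p)] (h2p : 2 ≤ p) (hp' : p ≠ ∞)
    (s₀ s ν₁ C₁ C : ℝ) (hs₀ : 0 < s₀) (hν₁ : 0 < ν₁) (hC₁ : 0 < C₁) (hC : 0 < C)
    (hsexp : ν₁ * (p.toReal - 2) / p.toReal + s₀ / r ≤ s)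
    (w : ι → ℝ) (hw : ∀ ξ, 1 ≤ w ξ)
    (hw0 : Summable fun ξ => w ξ ^ (-s₀))
    (u v : ι → M → ℂ)
    (hu2 : ∀ ξ, MemLp (u ξ) 2 μ) (hv2 : ∀ ξ, MemLp (v ξ) 2 μ)
    (huI : ∀ ξ, MemLp (u ξ) ∞ μ) (hvI : ∀ ξ, MemLp (v ξ) ∞ μ)
    (hun : ∀ ξ, eLpNorm (u ξ) 2 μ = 1) (hvn : ∀ ξ, eLpNorm (v ξ) 2 μ = 1)
    (hub : ∀ ξ, eLpNorm (u ξ) ∞ μ ≤ ENNReal.ofReal (C₁ * w ξ ^ ν₁))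
    (σ : ι → M → ℂ) (hσm : ∀ ξ, AEStronglyMeasurable (σ ξ) μ)
    (hσb : ∀ ξ x, ‖σ ξ x‖ ≤ C * w ξ ^ (-s))
    (hmem : ∀ ξ, MemLp (fun x => σ ξ x * u ξ x) p μ)
    (A : Lp ℂ p μ →L[ℂ] Lp ℂ p μ)
    (hA : ∀ f : Lp ℂ p μ,
      HasSum (fun ξ => (∫ x, f x * (starRingEnd ℂ) (v ξ x) ∂μ)
        • MemLp.toLp (fun x => σ ξ x * u ξ x) (hmem ξ)) (A f)) :
    IsRNuclear r A := by
  classical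
  obtain ⟨e, he⟩ := Countable.exists_injective_nat ι
  -- basic exponent facts
  have hpt2 : (2 : ℝ) ≤ p.toReal := by
    have := ENNReal.toReal_mono hp' h2p
    simpa using this
  have hpt0 : (0 : ℝ) < p.toReal := lt_of_lt_of_le two_pos hpt2
  set θ : ℝ := (p.toReal - 2) / p.toReal with hθdef
  have hθ0 : 0 ≤ θ := div_nonneg (by linarith) hpt0.le
  have hθexp : ν₁ * θ + s₀ / r ≤ s := by
    have : ν₁ * (p.toReal - 2) / p.toReal = ν₁ * θ := by
      rw [hθdef, mul_div_assoc]
    linarith [hsexp, this.symm.le, this.le]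
  -- the continuous inclusion Lp → L2
  have hmem2 : ∀ f : Lp ℂ p μ, MemLp (⇑f) 2 μ := fun f =>
    (Lp.memLp f).mono_exponent h2p
  let K : ℝ := (μ Set.univ).toReal ^ ((1 : ℝ) / 2 - 1 / p.toReal)
  let Jlin : Lp ℂ p μ →ₗ[ℂ] Lp ℂ 2 μ :=
    { toFun := fun f => (hmem2 f).toLp ⇑f
      map_add' := fun f g => by
        rw [← MemLp.toLp_add (hmem2 f) (hmem2 g)]
        exact MemLp.toLp_congr _ _ (Lp.coeFn_add f g)
      map_smul' := fun c f => by
        simp only [RingHom.id_apply]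
        rw [← MemLp.toLp_const_smul c (hmem2 f)]
        exact MemLp.toLp_congr _ _ (Lp.coeFn_smul c f) }
  have hJbound : ∀ f : Lp ℂ p μ, ‖Jlin f‖ ≤ K * ‖f‖ := by
    intro f
    have h1 : eLpNorm (⇑f) 2 μ ≤ eLpNorm (⇑f) p μ *
        μ Set.univ ^ ((1 : ℝ) / (2 : ℝ≥0∞).toReal - 1 / p.toReal) :=
      eLpNorm_le_eLpNorm_mul_rpow_measure_univ h2p (Lp.aestronglyMeasurable f)
    have h2 : ((1 : ℝ) / (2 : ℝ≥0∞).toReal - 1 / p.toReal) = ((1:ℝ)/2 - 1/p.toReal) := by norm_num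
    rw [h2] at h1
    have hfin : eLpNorm (⇑f) p μ * μ Set.univ ^ ((1:ℝ)/2 - 1/p.toReal) ≠ ∞ :=
      ENNReal.mul_ne_top (Lp.eLpNorm_ne_top f)
        (ENNReal.rpow_ne_top_of_nonneg (by
          have : (1:ℝ)/p.toReal ≤ 1/2 := by
            apply one_div_le_one_div_of_le <;> linarith
          linarith) (measure_ne_top μ _))
    calc ‖Jlin f‖ = (eLpNorm (⇑f) 2 μ).toReal := Lp.norm_toLp (⇑f) (hmem2 f)
      _ ≤ (eLpNorm (⇑f) p μ * μ Set.univ ^ ((1:ℝ)/2 - 1/p.toReal)).toReal :=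
          ENNReal.toReal_mono hfin h1
      _ = ‖f‖ * K := by
          rw [ENNReal.toReal_mul, ← ENNReal.toReal_rpow, Lp.norm_def]
      _ = K * ‖f‖ := mul_comm _ _
  let J : Lp ℂ p μ →L[ℂ] Lp ℂ 2 μ := Jlin.mkContinuous K hJbound
  -- the functionals
  let Φ : ι → (Lp ℂ p μ →L[ℂ] ℂ) := fun ξ => (innerSL ℂ ((hv2 ξ).toLp (v ξ))).comp J
  have hΦnorm : ∀ ξ, ‖Φ ξ‖ ≤ ‖J‖ := by
    intro ξ
    calc ‖Φ ξ‖ ≤ ‖innerSL ℂ ((hv2 ξ).toLp (v ξ))‖ * ‖J‖ :=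
          ContinuousLinearMap.opNorm_comp_le _ _
      _ = ‖(hv2 ξ).toLp (v ξ)‖ * ‖J‖ := by rw [innerSL_apply_norm]
      _ = ‖J‖ := by
          rw [Lp.norm_toLp (v ξ) (hv2 ξ), hvn ξ]
          simp
  have hΦval : ∀ ξ (f : Lp ℂ p μ),
      Φ ξ f = ∫ x, f x * (starRingEnd ℂ) (v ξ x) ∂μ := by
    intro ξ f
    show @inner ℂ _ _ ((hv2 ξ).toLp (v ξ)) (J f) = _
    rw [L2.inner_def]
    refine integral_congr_ae ?_
    filter_upwards [MemLp.coeFn_toLp (hv2 ξ), MemLp.coeFn_toLp (hmem2 f)] with x hx hx'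
    have : (J f : M → ℂ) x = f x := hx'
    rw [RCLike.inner_apply, hx, this, mul_comm]
  -- the vectors
  let Y : ι → Lp ℂ p μ := fun ξ => MemLp.toLp (fun x => σ ξ x * u ξ x) (hmem ξ)
  -- main norm estimate on Y
  have hwpos : ∀ ξ, (0:ℝ) < w ξ := fun ξ => lt_of_lt_of_le one_pos (hw ξ)
  have hY : ∀ ξ, ‖Y ξ‖ ≤ C * C₁ ^ θ * w ξ ^ (ν₁ * θ - s) := by
    intro ξ
    set B : ℝ≥0∞ := ENNReal.ofReal (C₁ * w ξ ^ ν₁) with hB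
    have hp0 : p ≠ 0 := (lt_of_lt_of_le (by norm_num) h2p).ne'
    -- the L² integral of u equals 1
    have hI2 : ∫⁻ x, (‖u ξ x‖₊ : ℝ≥0∞) ^ (2 : ℝ) ∂μ = 1 := by
      have h := hun ξ
      rw [eLpNorm_eq_lintegral_rpow_enorm_toReal (by norm_num) (by norm_num)] at h
      have h2 : ((2 : ℝ≥0∞).toReal) = (2 : ℝ) := by norm_num
      rw [h2] at h
      have h3 : (∫⁻ x, (‖u ξ x‖₊ : ℝ≥0∞) ^ (2 : ℝ) ∂μ) ^ ((1:ℝ)/2 * 2) = 1 := by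
        rw [ENNReal.rpow_mul]
        exact (congrArg (· ^ (2:ℝ)) h).trans (ENNReal.one_rpow _)
      rw [show (1:ℝ)/2*2 = 1 by norm_num, ENNReal.rpow_one] at h3
      exact h3
    -- a.e. bound on u
    have haeb : ∀ᵐ x ∂μ, (‖u ξ x‖₊ : ℝ≥0∞) ≤ B := by
      filter_upwards [enorm_ae_le_eLpNormEssSup (u ξ) μ] with x hx
      exact hx.trans (by rw [← eLpNorm_exponent_top]; exact hub ξ)
    -- interpolation
    have hpt : eLpNorm (u ξ) p μ ≤ B ^ θ := by
      have hpb : ∀ᵐ x ∂μ, (‖u ξ x‖₊ : ℝ≥0∞) ^ p.toReal ≤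
          B ^ (p.toReal - 2) * (‖u ξ x‖₊ : ℝ≥0∞) ^ (2 : ℝ) := by
        filter_upwards [haeb] with x hx
        rcases eq_or_ne ((‖u ξ x‖₊ : ℝ≥0∞)) 0 with h0 | h0
        · rw [h0, ENNReal.zero_rpow_of_pos hpt0]; exact bot_le
        · calc (‖u ξ x‖₊ : ℝ≥0∞) ^ p.toReal
              = (‖u ξ x‖₊ : ℝ≥0∞) ^ (p.toReal - 2) * (‖u ξ x‖₊ : ℝ≥0∞) ^ (2 : ℝ) := by
                rw [← ENNReal.rpow_add _ _ h0 ENNReal.coe_ne_top]; ring_nf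
            _ ≤ B ^ (p.toReal - 2) * (‖u ξ x‖₊ : ℝ≥0∞) ^ (2 : ℝ) := by
                gcongr
      have hBfin : B ^ (p.toReal - 2) ≠ ∞ :=
        ENNReal.rpow_ne_top_of_nonneg (by linarith) ENNReal.ofReal_ne_top
      have hint : ∫⁻ x, (‖u ξ x‖₊ : ℝ≥0∞) ^ p.toReal ∂μ ≤ B ^ (p.toReal - 2) := by
        calc ∫⁻ x, (‖u ξ x‖₊ : ℝ≥0∞) ^ p.toReal ∂μ
            ≤ ∫⁻ x, B ^ (p.toReal - 2) * (‖u ξ x‖₊ : ℝ≥0∞) ^ (2 : ℝ) ∂μ :=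
              lintegral_mono_ae hpb
          _ = B ^ (p.toReal - 2) * ∫⁻ x, (‖u ξ x‖₊ : ℝ≥0∞) ^ (2 : ℝ) ∂μ :=
              lintegral_const_mul' _ _ hBfin
          _ = B ^ (p.toReal - 2) := by rw [hI2, mul_one]
      rw [eLpNorm_eq_lintegral_rpow_enorm_toReal hp0 hp']
      calc (∫⁻ x, (‖u ξ x‖₊ : ℝ≥0∞) ^ p.toReal ∂μ) ^ (1 / p.toReal)
          ≤ (B ^ (p.toReal - 2)) ^ (1 / p.toReal) :=
            ENNReal.rpow_le_rpow hint (by positivity)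
        _ = B ^ θ := by
            rw [← ENNReal.rpow_mul]
            congr 1
            rw [hθdef, mul_one_div]
    -- bound on σ·u
    have hc : (0 : ℝ) ≤ C * w ξ ^ (-s) :=
      mul_nonneg hC.le (Real.rpow_nonneg (hwpos ξ).le _)
    have hσ : eLpNorm (fun x => σ ξ x * u ξ x) p μ ≤
        ENNReal.ofReal (C * w ξ ^ (-s)) * B ^ θ := by
      have h1 : eLpNorm (fun x => σ ξ x * u ξ x) p μ ≤
          (C * w ξ ^ (-s)).toNNReal • eLpNorm (u ξ) p μ := by
        refine eLpNorm_le_nnreal_smul_eLpNorm_of_ae_le_mul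
          (Filter.Eventually.of_forall fun x => ?_) p
        show ‖σ ξ x * u ξ x‖ ≤ _
        rw [norm_mul]
        exact mul_le_mul_of_nonneg_right
          ((hσb ξ x).trans_eq (Real.coe_toNNReal _ hc).symm) (norm_nonneg _)
      calc eLpNorm (fun x => σ ξ x * u ξ x) p μ
          ≤ (C * w ξ ^ (-s)).toNNReal • eLpNorm (u ξ) p μ := h1
        _ = ENNReal.ofReal (C * w ξ ^ (-s)) * eLpNorm (u ξ) p μ := by
            rw [ENNReal.smul_def, smul_eq_mul]; rfl
        _ ≤ ENNReal.ofReal (C * w ξ ^ (-s)) * B ^ θ := by gcongr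
    have hfin : ENNReal.ofReal (C * w ξ ^ (-s)) * B ^ θ ≠ ∞ :=
      ENNReal.mul_ne_top ENNReal.ofReal_ne_top
        (ENNReal.rpow_ne_top_of_nonneg hθ0 ENNReal.ofReal_ne_top)
    have hYnorm : ‖Y ξ‖ = (eLpNorm (fun x => σ ξ x * u ξ x) p μ).toReal :=
      Lp.norm_toLp _ _
    rw [hYnorm]
    refine le_trans (ENNReal.toReal_mono hfin hσ) ?_
    have hC₁w : (0 : ℝ) < C₁ * w ξ ^ ν₁ :=
      mul_pos hC₁ (Real.rpow_pos_of_pos (hwpos ξ) _)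
    rw [hB, ENNReal.ofReal_rpow_of_pos hC₁w,
      ← ENNReal.ofReal_mul hc, ENNReal.toReal_ofReal (mul_nonneg hc (Real.rpow_nonneg hC₁w.le _))]
    have hw1 : w ξ ^ (ν₁ * θ - s) = w ξ ^ (ν₁ * θ) * w ξ ^ (-s) := by
      rw [← Real.rpow_add (hwpos ξ)]; ring_nf
    have hw2 : (C₁ * w ξ ^ ν₁) ^ θ = C₁ ^ θ * w ξ ^ (ν₁ * θ) := by
      rw [Real.mul_rpow hC₁.le (Real.rpow_nonneg (hwpos ξ).le _),
        ← Real.rpow_mul (hwpos ξ).le]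
    rw [hw1, hw2]; ring_nf; exact le_refl _
  -- extend to ℕ
  let φ : ℕ → (Lp ℂ p μ →L[ℂ] ℂ) := Function.extend e Φ 0
  let y : ℕ → Lp ℂ p μ := Function.extend e Y 0
  refine ⟨φ, y, ?_, ?_⟩
  · intro f
    have hzero : ∀ k ∉ Set.range e, φ k f • y k = 0 := by
      intro k hk
      have h1 : φ k = 0 := Function.extend_apply' _ _ _ (by simpa [Set.range] using hk)
      rw [h1]; simp
    rw [← he.hasSum_iff hzero]
    have : (fun ξ => φ (e ξ) f • y (e ξ)) =
        fun ξ => (∫ x, f x * (starRingEnd ℂ) (v ξ x) ∂μ) • Y ξ := by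
      funext ξ
      rw [show φ (e ξ) = Φ ξ from he.extend_apply _ _ _,
        show y (e ξ) = Y ξ from he.extend_apply _ _ _, hΦval]
    simpa [Function.comp_def, this] using hA f
  · have hDsum : Summable (Function.extend e
        (fun ξ => (‖J‖ ^ r * (C * C₁ ^ θ) ^ r) * w ξ ^ (-s₀)) 0) := by
      have hz : ∀ k ∉ Set.range e, Function.extend e
          (fun ξ => (‖J‖ ^ r * (C * C₁ ^ θ) ^ r) * w ξ ^ (-s₀)) 0 k = 0 := fun k hk =>
        Function.extend_apply' _ _ _ (by simpa [Set.range] using hk)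
      refine (Function.Injective.summable_iff he hz).mp ?_
      have : (Function.extend e
          (fun ξ => (‖J‖ ^ r * (C * C₁ ^ θ) ^ r) * w ξ ^ (-s₀)) 0) ∘ e =
          fun ξ => (‖J‖ ^ r * (C * C₁ ^ θ) ^ r) * w ξ ^ (-s₀) := by
        funext ξ; exact he.extend_apply _ _ _
      rw [this]
      exact hw0.mul_left _
    refine Summable.of_nonneg_of_le (fun k => ?_) (fun k => ?_) hDsum
    · exact mul_nonneg (Real.rpow_nonneg (norm_nonneg _) _)
        (Real.rpow_nonneg (norm_nonneg _) _)
    · by_cases hk : ∃ ξ, e ξ = k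
      · obtain ⟨ξ, rfl⟩ := hk
        rw [show φ (e ξ) = Φ ξ from he.extend_apply _ _ _,
          show y (e ξ) = Y ξ from he.extend_apply _ _ _,
          he.extend_apply (fun ξ => (‖J‖ ^ r * (C * C₁ ^ θ) ^ r) * w ξ ^ (-s₀)) 0 ξ]
        have hJ0 : (0:ℝ) ≤ ‖J‖ := norm_nonneg _
        have hCC : (0:ℝ) < C * C₁ ^ θ :=
          mul_pos hC (Real.rpow_pos_of_pos hC₁ _)
        have h1 : ‖Φ ξ‖ ^ r ≤ ‖J‖ ^ r :=
          Real.rpow_le_rpow (norm_nonneg _) (hΦnorm ξ) hr0.le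
        have h2 : ‖Y ξ‖ ^ r ≤ (C * C₁ ^ θ) ^ r * w ξ ^ (-s₀) := by
          calc ‖Y ξ‖ ^ r ≤ (C * C₁ ^ θ * w ξ ^ (ν₁ * θ - s)) ^ r :=
                Real.rpow_le_rpow (norm_nonneg _) (hY ξ) hr0.le
            _ = (C * C₁ ^ θ) ^ r * (w ξ ^ (ν₁ * θ - s)) ^ r :=
                Real.mul_rpow hCC.le (Real.rpow_nonneg (hwpos ξ).le _)
            _ = (C * C₁ ^ θ) ^ r * w ξ ^ ((ν₁ * θ - s) * r) := by
                rw [← Real.rpow_mul (hwpos ξ).le]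
            _ ≤ (C * C₁ ^ θ) ^ r * w ξ ^ (-s₀) := by
                have hexp : (ν₁ * θ - s) * r ≤ -s₀ := by
                  have h3 : s₀ ≤ (s - ν₁ * θ) * r := by
                    have := (div_le_iff₀ hr0).mp (by linarith : s₀ / r ≤ s - ν₁ * θ)
                    linarith
                  nlinarith
                exact mul_le_mul_of_nonneg_left
                  (Real.rpow_le_rpow_of_exponent_le (hw ξ) hexp)
                  (Real.rpow_nonneg hCC.le _)
        calc ‖Φ ξ‖ ^ r * ‖Y ξ‖ ^ r ≤ ‖J‖ ^ r * ((C * C₁ ^ θ) ^ r * w ξ ^ (-s₀)) :=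
              mul_le_mul h1 h2 (Real.rpow_nonneg (norm_nonneg _) _)
                (Real.rpow_nonneg hJ0 _)
          _ = ‖J‖ ^ r * (C * C₁ ^ θ) ^ r * w ξ ^ (-s₀) := by ring
      · rw [show φ k = 0 from Function.extend_apply' _ _ _ hk,
          show y k = 0 from Function.extend_apply' _ _ _ hk,
          show Function.extend e (fun ξ => (‖J‖ ^ r * (C * C₁ ^ θ) ^ r) * w ξ ^ (-s₀)) 0 k = 0
            from Function.extend_apply' _ _ _ hk]
        simp [Real.zero_rpow hr0.ne']
end
end

section
/- Let 0<r≤1, 1≤p≤2, s₀>0 and s ≥ ν₂·(2/p-1) + s₀/r. Let (M,μ) be a finite measure space, ι a countable index set, w : ι → [1,∞) with ∑_{ξ∈ι} w(ξ)^{-s₀} < ∞, and (u_ξ)_{ξ∈ι}, (v_ξ)_{ξ∈ι} families in L²(μ)∩L^∞(μ) with ‖u_ξ‖_{L²}=‖v_ξ‖_{L²}=1 and ‖v_ξ‖_{L^∞} ≤ C₂·w(ξ)^{ν₂} for all ξ, where C₂,ν₂ > 0. Let σ : M×ι → ℂ be measurable with |σ(x,ξ)| ≤ C·w(ξ)^{-s}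 for all (x,ξ) and some C>0. Let A : L^{p}(μ) → L^{p}(μ) be a bounded linear operator such that for every f ∈ L^{p}(μ), A f = ∑_{ξ∈ι} (∫_M f·\overline{v_ξ} dμ)·σ(·,ξ)·u_ξ, with the series converging in L^{p}(μ). Then A is r-nuclear from L^{p}(μ) to L^{p}(μ). -/
open MeasureTheory
open scoped ENNReal

noncomputable section

theorem eLpNorm_le_mul_of_norm_aux {α E F G : Type*} [MeasurableSpace α] {μ : Measure α}
    [NormedAddCommGroup E] [NormedAddCommGroup F] [NormedAddCommGroup G]
    {f : α → E} {g : α → F} {p q r : ℝ≥0∞} (hf : AEStronglyMeasurable f μ)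
    (hg : AEStronglyMeasurable g μ) (b : E → F → G)
    (h : ∀ᵐ x ∂μ, ‖b (f x) (g x)‖ ≤ ‖f x‖ * ‖g x‖) (hpqr : 1 / r = 1 / p + 1 / q) :
    eLpNorm (fun x => b (f x) (g x)) r μ ≤ eLpNorm f p μ * eLpNorm g q μ := by
  haveI : ENNReal.HolderTriple p q r := ⟨by simpa [one_div] using hpqr.symm⟩
  simpa using eLpNorm_le_eLpNorm_mul_eLpNorm'_of_norm hf hg b 1 (by simpa using h)

theorem statement_12
    {M : Type*} [MeasurableSpace M] {μ : Measure M} [IsFiniteMeasure μ]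
    {ι : Type*} [Countable ι]
    (r : ℝ) (hr0 : 0 < r) (hr1 : r ≤ 1)
    (p : ℝ≥0∞) [Fact (1 ≤ p)] (hp2 : p ≤ 2)
    (s₀ s ν₂ C₂ C : ℝ) (hs₀ : 0 < s₀) (hν₂ : 0 < ν₂) (hC₂ : 0 < C₂) (hC : 0 < C)
    (hsexp : ν₂ * (2 / p.toReal - 1) + s₀ / r ≤ s)
    (w : ι → ℝ) (hw : ∀ ξ, 1 ≤ w ξ)
    (hw0 : Summable fun ξ => w ξ ^ (-s₀))
    (u v : ι → M → ℂ)
    (hu2 : ∀ ξ, MemLp (u ξ) 2 μ) (hv2 : ∀ ξ, MemLp (v ξ) 2 μ)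
    (huI : ∀ ξ, MemLp (u ξ) ∞ μ) (hvI : ∀ ξ, MemLp (v ξ) ∞ μ)
    (hun : ∀ ξ, eLpNorm (u ξ) 2 μ = 1) (hvn : ∀ ξ, eLpNorm (v ξ) 2 μ = 1)
    (hvb : ∀ ξ, eLpNorm (v ξ) ∞ μ ≤ ENNReal.ofReal (C₂ * w ξ ^ ν₂))
    (σ : ι → M → ℂ) (hσm : ∀ ξ, AEStronglyMeasurable (σ ξ) μ)
    (hσb : ∀ ξ x, ‖σ ξ x‖ ≤ C * w ξ ^ (-s))
    (hmem : ∀ ξ, MemLp (fun x => σ ξ x * u ξ x) p μ)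
    (A : Lp ℂ p μ →L[ℂ] Lp ℂ p μ)
    (hA : ∀ f : Lp ℂ p μ,
      HasSum (fun ξ => (∫ x, f x * (starRingEnd ℂ) (v ξ x) ∂μ)
        • MemLp.toLp (fun x => σ ξ x * u ξ x) (hmem ξ)) (A f)) :
    IsRNuclear r A := by
  classical
  have hp1 : (1 : ℝ≥0∞) ≤ p := Fact.out
  have hpne : p ≠ ∞ := (hp2.trans_lt (by norm_num)).ne
  set pr := p.toReal with hprdef
  have hpr1 : 1 ≤ pr := by
    have := ENNReal.toReal_mono hpne hp1
    simpa using this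
  have hpr0 : 0 < pr := lt_of_lt_of_le one_pos hpr1
  have hpr2 : pr ≤ 2 := by
    have := ENNReal.toReal_mono (by norm_num : (2 : ℝ≥0∞) ≠ ∞) hp2
    simpa using this
  set β := 2 / pr - 1 with hβdef
  have hβ0 : 0 ≤ β := by
    have h1 : 1 ≤ 2 / pr := (le_div_iff₀ hpr0).2 (by linarith)
    simp only [hβdef]; linarith
  set Dμ : ℝ := (μ Set.univ ^ (1 / pr - 1 / 2)).toReal with hDdef
  have hD0 : 0 ≤ Dμ := ENNReal.toReal_nonneg
  have hwpos : ∀ ξ, (0 : ℝ) < w ξ := fun ξ => lt_of_lt_of_le one_pos (hw ξ)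
  set Kr : ι → ℝ := fun ξ => (C₂ * w ξ ^ ν₂) ^ β with hKrdef
  set Lr : ι → ℝ := fun ξ => Dμ * (C * w ξ ^ (-s)) with hLrdef
  have hKpos : ∀ ξ, 0 < C₂ * w ξ ^ ν₂ :=
    fun ξ => mul_pos hC₂ (Real.rpow_pos_of_pos (hwpos ξ) _)
  have hK0 : ∀ ξ, 0 ≤ Kr ξ := fun ξ => Real.rpow_nonneg (hKpos ξ).le _
  have hL0 : ∀ ξ, 0 ≤ Lr ξ :=
    fun ξ => mul_nonneg hD0 (mul_nonneg hC.le (Real.rpow_nonneg (hwpos ξ).le _))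
  -- the conjugate functions
  have hcvnorm : ∀ ξ x, ‖(starRingEnd ℂ) (v ξ x)‖ = ‖v ξ x‖ := fun ξ x => RCLike.norm_conj _
  have hcvm : ∀ ξ, AEStronglyMeasurable (fun x => (starRingEnd ℂ) (v ξ x)) μ := by
    intro ξ
    exact RCLike.continuous_conj.comp_aestronglyMeasurable (hv2 ξ).1
  have hcveq : ∀ ξ (q : ℝ≥0∞),
      eLpNorm (fun x => (starRingEnd ℂ) (v ξ x)) q μ = eLpNorm (v ξ) q μ := by
    intro ξ q
    exact le_antisymm (eLpNorm_mono fun x => by rw [hcvnorm])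
      (eLpNorm_mono fun x => by rw [hcvnorm])
  -- integrability of the pairing
  have hint : ∀ ξ (f : Lp ℂ p μ),
      Integrable (fun x => (f : M → ℂ) x * (starRingEnd ℂ) (v ξ x)) μ := by
    intro ξ f
    have hcvI : MemLp (fun x => (starRingEnd ℂ) (v ξ x)) ∞ μ :=
      ⟨hcvm ξ, by rw [hcveq]; exact (hvI ξ).2⟩
    have hf1 : MemLp (f : M → ℂ) 1 μ := (Lp.memLp f).mono_exponent hp1
    have h := hf1.smul (φ := fun x => (starRingEnd ℂ) (v ξ x)) hcvI (r := 1)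
    have heq : ((fun x => (starRingEnd ℂ) (v ξ x)) • (f : M → ℂ))
        = fun x => (f : M → ℂ) x * (starRingEnd ℂ) (v ξ x) := by
      funext x
      simp [Pi.smul_apply', smul_eq_mul, mul_comm]
    rw [heq] at h
    exact h.integrable le_rfl
  -- interpolation / Hölder bound at the ENNReal level
  have hold : ∀ ξ (f : Lp ℂ p μ),
      eLpNorm (fun x => (f : M → ℂ) x * (starRingEnd ℂ) (v ξ x)) 1 μ
        ≤ eLpNorm (f : M → ℂ) p μ * eLpNorm (v ξ) ∞ μ ^ β := by
    intro ξ f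
    have hfm : AEStronglyMeasurable (f : M → ℂ) μ := Lp.aestronglyMeasurable f
    by_cases hP1 : p = 1
    · have hpr : pr = 1 := by rw [hprdef, hP1]; simp
      have hβ1 : β = 1 := by rw [hβdef, hpr]; norm_num
      have hexp : (1 : ℝ≥0∞) / 1 = 1 / p + 1 / ∞ := by rw [hP1]; simp
      have h := eLpNorm_le_mul_of_norm_aux
        (f := (f : M → ℂ)) (g := fun x => (starRingEnd ℂ) (v ξ x)) hfm (hcvm ξ)
        (fun a b => a * b)
        (Filter.Eventually.of_forall fun x => le_of_eq (norm_mul _ _)) hexp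
      rw [hcveq ξ ∞] at h
      rw [hβ1, ENNReal.rpow_one]
      exact h
    by_cases hP2 : p = 2
    · have hpr : pr = 2 := by rw [hprdef, hP2]; simp
      have hβ2 : β = 0 := by rw [hβdef, hpr]; norm_num
      have hexp : (1 : ℝ≥0∞) / 1 = 1 / p + 1 / 2 := by
        rw [hP2, ENNReal.add_halves]; simp
      have h := eLpNorm_le_mul_of_norm_aux
        (f := (f : M → ℂ)) (g := fun x => (starRingEnd ℂ) (v ξ x)) hfm (hcvm ξ)
        (fun a b => a * b)
        (Filter.Eventually.of_forall fun x => le_of_eq (norm_mul _ _)) hexp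
      rw [hcveq ξ 2, hvn ξ, mul_one] at h
      rw [hβ2, ENNReal.rpow_zero, mul_one]
      exact h
    · -- middle case : 1 < p < 2
      have hpr1' : 1 < pr := by
        have h1 : (1 : ℝ≥0∞) < p := lt_of_le_of_ne hp1 (Ne.symm hP1)
        have := ENNReal.toReal_strict_mono hpne h1
        simpa using this
      have hpr2' : pr < 2 := by
        have h1 : p < 2 := lt_of_le_of_ne hp2 hP2
        have := ENNReal.toReal_strict_mono (by norm_num : (2 : ℝ≥0∞) ≠ ∞) h1
        simpa using this
      set t : ℝ := 2 - 2 / pr with htdef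
      have ht0 : 0 < t := by
        have h1 : 2 / pr < 2 := by rw [div_lt_iff₀ hpr0]; nlinarith
        rw [htdef]; linarith
      have hβ0' : 0 < β := by
        have h1 : 1 < 2 / pr := (lt_div_iff₀ hpr0).2 (by linarith)
        rw [hβdef]; linarith
      have htβ : t + β = 1 := by rw [htdef, hβdef]; ring
      set q₁ : ℝ≥0∞ := ENNReal.ofReal (2 / t) with hq₁def
      have hvm : AEStronglyMeasurable (v ξ) μ := (hv2 ξ).1
      have hrt : AEStronglyMeasurable (fun x => ‖v ξ x‖ ^ t) μ :=
        (continuous_id.rpow_const fun x => Or.inr ht0.le).comp_aestronglyMeasurable hvm.norm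
      have hrβ : AEStronglyMeasurable (fun x => ‖v ξ x‖ ^ β) μ :=
        (continuous_id.rpow_const fun x => Or.inr hβ0'.le).comp_aestronglyMeasurable hvm.norm
      have step1 : eLpNorm (fun x => (f : M → ℂ) x * (starRingEnd ℂ) (v ξ x)) 1 μ
          ≤ eLpNorm (fun x => (‖(f : M → ℂ) x‖ * ‖v ξ x‖ ^ t) * ‖v ξ x‖ ^ β) 1 μ := by
        refine eLpNorm_mono fun x => ?_
        have hv1 : ‖v ξ x‖ ^ t * ‖v ξ x‖ ^ β = ‖v ξ x‖ := by
          rw [← Real.rpow_add' (norm_nonneg _) (by rw [htβ]; norm_num), htβ, Real.rpow_one]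
        rw [norm_mul, hcvnorm, Real.norm_eq_abs, abs_of_nonneg (by positivity),
          mul_assoc, hv1]
      have hexp2 : (1 : ℝ≥0∞) / 1 = 1 / 1 + 1 / ∞ := by simp
      have step2 := eLpNorm_le_mul_of_norm_aux
        (f := fun x => ‖(f : M → ℂ) x‖ * ‖v ξ x‖ ^ t) (g := fun x => ‖v ξ x‖ ^ β)
        (hfm.norm.mul hrt) hrβ (fun a b => a * b)
        (Filter.Eventually.of_forall fun x => le_of_eq (norm_mul _ _)) hexp2
      have h2t0 : (0 : ℝ) < 2 / t := by positivity
      have hexp3 : (1 : ℝ≥0∞) / 1 = 1 / p + 1 / q₁ := by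
        have hsumr : pr⁻¹ + (2 / t)⁻¹ = 1 := by
          rw [inv_div, htdef]
          field_simp
          ring
        calc (1 : ℝ≥0∞) / 1 = 1 := by simp
          _ = ENNReal.ofReal (pr⁻¹ + (2 / t)⁻¹) := by rw [hsumr]; simp
          _ = ENNReal.ofReal pr⁻¹ + ENNReal.ofReal (2 / t)⁻¹ :=
            ENNReal.ofReal_add (by positivity) (by positivity)
          _ = 1 / p + 1 / q₁ := by
            rw [ENNReal.ofReal_inv_of_pos hpr0, ENNReal.ofReal_inv_of_pos h2t0,
              hprdef, ENNReal.ofReal_toReal hpne, hq₁def, one_div, one_div]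
      have step3 := eLpNorm_le_mul_of_norm_aux
        (f := (f : M → ℂ)) (g := fun x => ‖v ξ x‖ ^ t) hfm hrt (fun a c => ‖a‖ * c)
        (Filter.Eventually.of_forall fun x => le_of_eq (by rw [norm_mul, norm_norm])) hexp3
      have hq₁2 : q₁ * ENNReal.ofReal t = 2 := by
        rw [hq₁def, ← ENNReal.ofReal_mul (by positivity), div_mul_cancel₀ _ ht0.ne']
        norm_num
      have step4 : eLpNorm (fun x => ‖v ξ x‖ ^ t) q₁ μ = 1 := by
        rw [eLpNorm_norm_rpow _ ht0, hq₁2, hvn ξ, ENNReal.one_rpow]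
      have step5 : eLpNorm (fun x => ‖v ξ x‖ ^ β) ∞ μ = eLpNorm (v ξ) ∞ μ ^ β := by
        rw [eLpNorm_norm_rpow _ hβ0',
          ENNReal.top_mul (ENNReal.ofReal_pos.2 hβ0').ne']
      calc eLpNorm (fun x => (f : M → ℂ) x * (starRingEnd ℂ) (v ξ x)) 1 μ
          ≤ eLpNorm (fun x => (‖(f : M → ℂ) x‖ * ‖v ξ x‖ ^ t) * ‖v ξ x‖ ^ β) 1 μ := step1
        _ ≤ eLpNorm (fun x => ‖(f : M → ℂ) x‖ * ‖v ξ x‖ ^ t) 1 μ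
            * eLpNorm (fun x => ‖v ξ x‖ ^ β) ∞ μ := step2
        _ ≤ (eLpNorm (f : M → ℂ) p μ * eLpNorm (fun x => ‖v ξ x‖ ^ t) q₁ μ)
            * eLpNorm (fun x => ‖v ξ x‖ ^ β) ∞ μ := mul_le_mul_left step3 _
        _ = eLpNorm (f : M → ℂ) p μ * eLpNorm (v ξ) ∞ μ ^ β := by
            rw [step4, mul_one, step5]
  -- norm bound for the functionals
  have hbound : ∀ ξ (f : Lp ℂ p μ),
      ‖∫ x, (f : M → ℂ) x * (starRingEnd ℂ) (v ξ x) ∂μ‖ ≤ Kr ξ * ‖f‖ := by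
    intro ξ f
    have h1 : ‖∫ x, (f : M → ℂ) x * (starRingEnd ℂ) (v ξ x) ∂μ‖
        ≤ (eLpNorm (fun x => (f : M → ℂ) x * (starRingEnd ℂ) (v ξ x)) 1 μ).toReal := by
      rw [eLpNorm_one_eq_lintegral_enorm]
      simp only [← ofReal_norm_eq_enorm]
      exact norm_integral_le_lintegral_norm (fun x => (f : M → ℂ) x * (starRingEnd ℂ) (v ξ x))
    have h3 : eLpNorm (v ξ) ∞ μ ^ β ≤ ENNReal.ofReal (Kr ξ) := by
      calc eLpNorm (v ξ) ∞ μ ^ β ≤ (ENNReal.ofReal (C₂ * w ξ ^ ν₂)) ^ β :=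
            ENNReal.rpow_le_rpow (hvb ξ) hβ0
        _ = ENNReal.ofReal (Kr ξ) := ENNReal.ofReal_rpow_of_pos (hKpos ξ)
    have h4 : eLpNorm (fun x => (f : M → ℂ) x * (starRingEnd ℂ) (v ξ x)) 1 μ
        ≤ eLpNorm (f : M → ℂ) p μ * ENNReal.ofReal (Kr ξ) :=
      (hold ξ f).trans (mul_le_mul_right h3 _)
    have h5 := ENNReal.toReal_mono
      (ENNReal.mul_ne_top (Lp.eLpNorm_ne_top f) ENNReal.ofReal_ne_top) h4
    rw [ENNReal.toReal_mul, ENNReal.toReal_ofReal (hK0 ξ)] at h5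
    calc ‖∫ x, (f : M → ℂ) x * (starRingEnd ℂ) (v ξ x) ∂μ‖
        ≤ (eLpNorm (fun x => (f : M → ℂ) x * (starRingEnd ℂ) (v ξ x)) 1 μ).toReal := h1
      _ ≤ (eLpNorm (f : M → ℂ) p μ).toReal * Kr ξ := h5
      _ = Kr ξ * ‖f‖ := by rw [← Lp.norm_def, mul_comm]
  -- the functionals
  let Φ : ι → (Lp ℂ p μ →L[ℂ] ℂ) := fun ξ =>
    LinearMap.mkContinuous
      { toFun := fun f => ∫ x, (f : M → ℂ) x * (starRingEnd ℂ) (v ξ x) ∂μ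
        map_add' := by
          intro f g
          have hfg : (((f + g : Lp ℂ p μ)) : M → ℂ) =ᵐ[μ] (f : M → ℂ) + (g : M → ℂ) :=
            Lp.coeFn_add f g
          calc ∫ x, ((f + g : Lp ℂ p μ) : M → ℂ) x * (starRingEnd ℂ) (v ξ x) ∂μ
              = ∫ x, ((f : M → ℂ) x * (starRingEnd ℂ) (v ξ x)
                + (g : M → ℂ) x * (starRingEnd ℂ) (v ξ x)) ∂μ := by
                refine integral_congr_ae (hfg.mono fun x hx => ?_)
                simp only [hx, Pi.add_apply]; ring
            _ = _ := integral_add (hint ξ f) (hint ξ g)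
        map_smul' := by
          intro c f
          have hcf : (((c • f : Lp ℂ p μ)) : M → ℂ) =ᵐ[μ] c • (f : M → ℂ) :=
            Lp.coeFn_smul c f
          simp only [RingHom.id_apply, smul_eq_mul]
          calc ∫ x, ((c • f : Lp ℂ p μ) : M → ℂ) x * (starRingEnd ℂ) (v ξ x) ∂μ
              = ∫ x, c • ((f : M → ℂ) x * (starRingEnd ℂ) (v ξ x)) ∂μ := by
                refine integral_congr_ae (hcf.mono fun x hx => ?_)
                simp only [hx, Pi.smul_apply, smul_eq_mul]; ring
            _ = c * ∫ x, (f : M → ℂ) x * (starRingEnd ℂ) (v ξ x) ∂μ := by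
                rw [integral_smul, smul_eq_mul] }
      (Kr ξ) (hbound ξ)
  have hΦapp : ∀ ξ (f : Lp ℂ p μ),
      Φ ξ f = ∫ x, (f : M → ℂ) x * (starRingEnd ℂ) (v ξ x) ∂μ := fun ξ f => rfl
  have hΦnorm : ∀ ξ, ‖Φ ξ‖ ≤ Kr ξ :=
    fun ξ => LinearMap.mkContinuous_norm_le _ (hK0 ξ) (hbound ξ)
  -- the vectors
  let Y : ι → Lp ℂ p μ := fun ξ => MemLp.toLp (fun x => σ ξ x * u ξ x) (hmem ξ)
  have hYnorm : ∀ ξ, ‖Y ξ‖ ≤ Lr ξ := by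
    intro ξ
    have hc0 : (0 : ℝ) ≤ C * w ξ ^ (-s) :=
      mul_nonneg hC.le (Real.rpow_nonneg (hwpos ξ).le _)
    have h2 : eLpNorm (fun x => σ ξ x * u ξ x) 2 μ ≤ ENNReal.ofReal (C * w ξ ^ (-s)) := by
      have hmono : eLpNorm (fun x => σ ξ x * u ξ x) 2 μ
          ≤ eLpNorm (fun x => (C * w ξ ^ (-s)) • u ξ x) 2 μ := by
        refine eLpNorm_mono fun x => ?_
        rw [norm_mul, norm_smul, Real.norm_eq_abs, abs_of_nonneg hc0]
        exact mul_le_mul_of_nonneg_right (hσb ξ x) (norm_nonneg _)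
      have hsmul : eLpNorm (fun x => (C * w ξ ^ (-s)) • u ξ x) 2 μ
          = ‖C * w ξ ^ (-s)‖₊ • eLpNorm (u ξ) 2 μ :=
        eLpNorm_const_smul (C * w ξ ^ (-s)) (u ξ) 2 μ
      rw [hsmul, hun ξ, ENNReal.smul_def, smul_eq_mul, mul_one,
        ← enorm_eq_nnnorm, Real.enorm_eq_ofReal hc0] at hmono
      exact hmono
    have h3 : eLpNorm (fun x => σ ξ x * u ξ x) p μ
        ≤ eLpNorm (fun x => σ ξ x * u ξ x) 2 μ * μ Set.univ ^ (1 / pr - 1 / 2) := by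
      have := eLpNorm_le_eLpNorm_mul_rpow_measure_univ hp2 (hmem ξ).1
      simpa [hprdef] using this
    have h4 : eLpNorm (fun x => σ ξ x * u ξ x) p μ
        ≤ ENNReal.ofReal (C * w ξ ^ (-s)) * μ Set.univ ^ (1 / pr - 1 / 2) :=
      h3.trans (mul_le_mul_left h2 _)
    have hexp0 : (0 : ℝ) ≤ 1 / pr - 1 / 2 := by
      have : 1 / 2 ≤ 1 / pr := by
        apply one_div_le_one_div_of_le hpr0 hpr2
      linarith
    have hfin : ENNReal.ofReal (C * w ξ ^ (-s)) * μ Set.univ ^ (1 / pr - 1 / 2) ≠ ∞ :=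
      ENNReal.mul_ne_top ENNReal.ofReal_ne_top
        (ENNReal.rpow_ne_top_of_nonneg hexp0 (measure_ne_top μ _))
    have h5 := ENNReal.toReal_mono hfin h4
    rw [ENNReal.toReal_mul, ENNReal.toReal_ofReal hc0] at h5
    calc ‖Y ξ‖ = (eLpNorm (fun x => σ ξ x * u ξ x) p μ).toReal :=
          Lp.norm_toLp _ (hmem ξ)
      _ ≤ (C * w ξ ^ (-s)) * Dμ := h5
      _ = Lr ξ := mul_comm _ _
  -- summability over ι
  have hsum : Summable (fun ξ => ‖Φ ξ‖ ^ r * ‖Y ξ‖ ^ r) := by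
    set E : ℝ := (C₂ ^ β * (Dμ * C)) ^ r with hEdef
    refine Summable.of_nonneg_of_le (fun ξ => ?_) (fun ξ => ?_) (hw0.mul_left E)
    · exact mul_nonneg (Real.rpow_nonneg (norm_nonneg _) _)
        (Real.rpow_nonneg (norm_nonneg _) _)
    · have h1 : ‖Φ ξ‖ ^ r * ‖Y ξ‖ ^ r = (‖Φ ξ‖ * ‖Y ξ‖) ^ r :=
        (Real.mul_rpow (norm_nonneg _) (norm_nonneg _)).symm
      have h2 : ‖Φ ξ‖ * ‖Y ξ‖ ≤ Kr ξ * Lr ξ :=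
        mul_le_mul (hΦnorm ξ) (hYnorm ξ) (norm_nonneg _) (hK0 ξ)
      have h4 : Kr ξ * Lr ξ = (C₂ ^ β * (Dμ * C)) * w ξ ^ (ν₂ * β - s) := by
        have e1 : Kr ξ = C₂ ^ β * w ξ ^ (ν₂ * β) := by
          show (C₂ * w ξ ^ ν₂) ^ β = _
          rw [Real.mul_rpow hC₂.le (Real.rpow_nonneg (hwpos ξ).le _),
            ← Real.rpow_mul (hwpos ξ).le]
        have e2 : w ξ ^ (ν₂ * β) * w ξ ^ (-s) = w ξ ^ (ν₂ * β - s) := by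
          rw [← Real.rpow_add (hwpos ξ)]
          ring_nf
        calc Kr ξ * Lr ξ = C₂ ^ β * w ξ ^ (ν₂ * β) * (Dμ * (C * w ξ ^ (-s))) := by rw [e1]
          _ = (C₂ ^ β * (Dμ * C)) * (w ξ ^ (ν₂ * β) * w ξ ^ (-s)) := by ring
          _ = (C₂ ^ β * (Dμ * C)) * w ξ ^ (ν₂ * β - s) := by rw [e2]
      have hE0 : (0 : ℝ) ≤ C₂ ^ β * (Dμ * C) :=
        mul_nonneg (Real.rpow_nonneg hC₂.le _) (mul_nonneg hD0 hC.le)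
      have h5 : (Kr ξ * Lr ξ) ^ r
          = E * (w ξ ^ (ν₂ * β - s)) ^ r := by
        rw [h4, Real.mul_rpow hE0 (Real.rpow_nonneg (hwpos ξ).le _)]
      have h7 : (ν₂ * β - s) * r ≤ -s₀ := by
        have h : ν₂ * β - s ≤ -(s₀ / r) := by linarith
        calc (ν₂ * β - s) * r ≤ (-(s₀ / r)) * r :=
              mul_le_mul_of_nonneg_right h hr0.le
          _ = -s₀ := by field_simp
      have h8 : (w ξ ^ (ν₂ * β - s)) ^ r ≤ w ξ ^ (-s₀) := by
        rw [← Real.rpow_mul (hwpos ξ).le]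
        exact Real.rpow_le_rpow_of_exponent_le (hw ξ) h7
      calc ‖Φ ξ‖ ^ r * ‖Y ξ‖ ^ r = (‖Φ ξ‖ * ‖Y ξ‖) ^ r := h1
        _ ≤ (Kr ξ * Lr ξ) ^ r :=
          Real.rpow_le_rpow (mul_nonneg (norm_nonneg _) (norm_nonneg _)) h2 hr0.le
        _ = E * (w ξ ^ (ν₂ * β - s)) ^ r := h5
        _ ≤ E * w ξ ^ (-s₀) := by
          refine mul_le_mul_of_nonneg_left h8 ?_
          exact Real.rpow_nonneg hE0 _
  -- transfer to ℕ
  obtain ⟨e, he⟩ := Countable.exists_injective_nat ι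
  refine ⟨Function.extend e Φ 0, Function.extend e Y 0, ?_, ?_⟩
  · intro f
    refine (he.hasSum_iff ?_).1 ?_
    · intro k hk
      have hk' : ¬∃ a, e a = k := by simpa [Set.mem_range] using hk
      rw [Function.extend_apply' _ _ _ hk', Function.extend_apply' _ _ _ hk']
      simp
    · have heq : ((fun k => (Function.extend e Φ 0) k f • (Function.extend e Y 0) k) ∘ e)
          = fun ξ => (∫ x, (f : M → ℂ) x * (starRingEnd ℂ) (v ξ x) ∂μ)
            • MemLp.toLp (fun x => σ ξ x * u ξ x) (hmem ξ) := by
        funext ξ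
        simp only [Function.comp_apply, he.extend_apply]
        rw [hΦapp]
      rw [heq]
      exact hA f
  · refine (he.summable_iff ?_).1 ?_
    · intro k hk
      have hk' : ¬∃ a, e a = k := by simpa [Set.mem_range] using hk
      rw [Function.extend_apply' _ _ _ hk', Function.extend_apply' _ _ _ hk']
      simp [Real.zero_rpow hr0.ne']
    · have heq : ((fun k => ‖(Function.extend e Φ 0) k‖ ^ r * ‖(Function.extend e Y 0) k‖ ^ r) ∘ e)
          = fun ξ => ‖Φ ξ‖ ^ r * ‖Y ξ‖ ^ r := by
        funext ξ
        simp only [Function.comp_apply, he.extend_apply]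
      rw [heq]
      exact hsum
end
end
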